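/- arXiv:2312.16452 — 7 statements merged into one kernel-verified Lean document; each statement's English description precedes it below -/
import Mathlib

section
/- Let Z(y) = (1−y²)/(1+y²) and V(y) = (y⁴ − 6y² + 1)/(1+y²)². Define, for functions on (0,∞), (Au)(y) = −u'(y) + Z(y)u(y)/y and (A*v)(y) = v'(y) + (1+Z(y))v(y)/y. Then for every twice differentiable u : (0,∞) → ℝ and every y > 0, (A*(Au))(y) = −u''(y) − (1/y)u'(y) + V(y)u(y)/y². In particular the linearized operator H factorizes as H = A*A. (Key identity: y·Z'(y) + Z(y)² = V(y).) -/
open Real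

/-- `Z(y) = (1-y²)/(1+y²)`. -/
noncomputable def Zfun (y : ℝ) : ℝ := (1 - y ^ 2) / (1 + y ^ 2)

/-- The potential `V(y) = (y⁴ - 6y² + 1)/(1+y²)²`. -/
noncomputable def Vfun (y : ℝ) : ℝ := (y ^ 4 - 6 * y ^ 2 + 1) / (1 + y ^ 2) ^ 2

/-- `(Au)(y) = -u'(y) + Z(y)u(y)/y`. -/
noncomputable def Aop (u : ℝ → ℝ) : ℝ → ℝ := fun y => -deriv u y + Zfun y * u y / y

/-- `(A*v)(y) = v'(y) + (1+Z(y))v(y)/y`. -/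
noncomputable def Astarop (v : ℝ → ℝ) : ℝ → ℝ := fun y => deriv v y + (1 + Zfun y) * v y / y

lemma one_add_sq_ne (y : ℝ) : (1 : ℝ) + y ^ 2 ≠ 0 := by positivity

lemma hasDerivAt_Zfun (y : ℝ) :
    HasDerivAt Zfun (-4 * y / (1 + y ^ 2) ^ 2) y := by
  have h1 : HasDerivAt (fun y : ℝ => 1 - y ^ 2) (-(2 * y)) y := by
    simpa using ((hasDerivAt_pow 2 y).const_sub 1)
  have h2 : HasDerivAt (fun y : ℝ => 1 + y ^ 2) (2 * y) y := by
    simpa using ((hasDerivAt_pow 2 y).const_add 1)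
  have := h1.div h2 (one_add_sq_ne y)
  exact this.congr_deriv (by ring)

lemma deriv_Zfun (y : ℝ) : deriv Zfun y = -4 * y / (1 + y ^ 2) ^ 2 :=
  (hasDerivAt_Zfun y).deriv

/-- Factorization `H = A*A` of the linearized Hamiltonian, together with the key
identity `y Z' + Z² = V`. -/
theorem factorization_of_H (u : ℝ → ℝ)
    (hu : ∀ y ∈ Set.Ioi (0:ℝ), DifferentiableAt ℝ u y)
    (hu' : ∀ y ∈ Set.Ioi (0:ℝ), DifferentiableAt ℝ (deriv u) y) :
    (∀ y > (0:ℝ),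
      Astarop (Aop u) y
        = -(deriv (deriv u) y) - (1 / y) * deriv u y + Vfun y * u y / y ^ 2) ∧
    (∀ y : ℝ, y * deriv Zfun y + Zfun y ^ 2 = Vfun y) := by
  constructor
  · intro y hy
    have hyne : y ≠ 0 := ne_of_gt hy
    have h1 : (1 : ℝ) + y ^ 2 ≠ 0 := one_add_sq_ne y
    -- derivative of Aop u at y
    have hA : HasDerivAt (Aop u)
        (-(deriv (deriv u) y)
          + (((-4 * y / (1 + y ^ 2) ^ 2) * u y + Zfun y * deriv u y) * y
              - Zfun y * u y * 1) / y ^ 2) y := by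
      have hd1 : HasDerivAt (fun z => -deriv u z) (-(deriv (deriv u) y)) y :=
        ((hu' y hy).hasDerivAt).neg
      have hd2 : HasDerivAt (fun z => Zfun z * u z)
          ((-4 * y / (1 + y ^ 2) ^ 2) * u y + Zfun y * deriv u y) y :=
        (hasDerivAt_Zfun y).mul ((hu y hy).hasDerivAt)
      have hd3 := hd2.div (hasDerivAt_id y) hyne
      exact hd1.add hd3
    have hderiv := hA.deriv
    simp only [Astarop, hderiv, Zfun, Vfun, Aop]
    field_simp
    ring
  · intro y
    rw [deriv_Zfun]
    have h1 : (1 : ℝ) + y ^ 2 ≠ 0 := one_add_sq_ne y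
    simp only [Zfun, Vfun]
    field_simp
    ring
end

section
/- Define Γ(y) = (2y/(1+y²)) · ( y²/8 + (log y)/2 − 1/(8y²) ) for y > 0, and let ΛQ(y) = 2y/(1+y²). Then: (i) Γ(y) = ΛQ(y) · ∫₁^y dx/(x·ΛQ(x)²) for all y > 0; (ii) HΓ = 0 on (0,∞), i.e. −Γ''(y) − (1/y)Γ'(y) + V(y)Γ(y)/y² = 0 for all y > 0; (iii) Γ(y) = O(1/y) as y → 0⁺ and Γ(y) − y/4 = O((log y)/y) as y → ∞; (iv) the Wronskian identity ΛQ(y)Γ'(y) − ΛQ'(y)Γ(y) = 1/y holds for all y > 0. -/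
open Real Filter Asymptotics

/-- The resonance `ΛQ(y) = 2y/(1+y²)`. -/
noncomputable def LamQ (y : ℝ) : ℝ := 2 * y / (1 + y ^ 2)

/-- The second element `Γ` of the kernel of `H`. -/
noncomputable def Gam (y : ℝ) : ℝ :=
  (2 * y / (1 + y ^ 2)) * (y ^ 2 / 8 + Real.log y / 2 - 1 / (8 * y ^ 2))


noncomputable def Ffun (y : ℝ) : ℝ := y ^ 2 / 8 + Real.log y / 2 - 1 / (8 * y ^ 2)
noncomputable def Fd (y : ℝ) : ℝ := (1 + y ^ 2) ^ 2 / (4 * y ^ 3)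
noncomputable def Ld (y : ℝ) : ℝ := 2 * (1 - y ^ 2) / (1 + y ^ 2) ^ 2
noncomputable def Ldd (y : ℝ) : ℝ := (4 * y ^ 3 - 12 * y) / (1 + y ^ 2) ^ 3
noncomputable def Fdd (y : ℝ) : ℝ := (1 + y ^ 2) * (y ^ 2 - 3) / (4 * y ^ 4)
noncomputable def G1 (y : ℝ) : ℝ := Ld y * Ffun y + LamQ y * Fd y
noncomputable def G2 (y : ℝ) : ℝ :=
  (Ldd y * Ffun y + Ld y * Fd y) + (Ld y * Fd y + LamQ y * Fdd y)

lemma hden (y : ℝ) : (1 + y ^ 2) ≠ 0 := by positivity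

lemma hasDerivAt_LamQ (y : ℝ) : HasDerivAt LamQ (Ld y) y := by
  have h1 : HasDerivAt (fun y : ℝ => 2 * y) 2 y := by
    simpa using (hasDerivAt_id y).const_mul 2
  have h2 : HasDerivAt (fun y : ℝ => 1 + y ^ 2) (2 * y) y := by
    simpa using (hasDerivAt_pow 2 y).const_add 1
  have := h1.div h2 (hden y)
  refine this.congr_deriv ?_
  unfold Ld; field_simp; ring

lemma hasDerivAt_Ffun {y : ℝ} (hy : y ≠ 0) : HasDerivAt Ffun (Fd y) y := by
  have h1 : HasDerivAt (fun y : ℝ => y ^ 2 / 8) (2 * y / 8) y := by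
    simpa using (hasDerivAt_pow 2 y).div_const 8
  have h2 : HasDerivAt (fun y : ℝ => Real.log y / 2) (y⁻¹ / 2) y :=
    (Real.hasDerivAt_log hy).div_const 2
  have h3 : HasDerivAt (fun y : ℝ => 1 / (8 * y ^ 2))
      ((0 * (8 * y ^ 2) - 1 * (8 * (2 * y))) / (8 * y ^ 2) ^ 2) y := by
    have hd : HasDerivAt (fun y : ℝ => 8 * y ^ 2) (8 * (2 * y)) y := by
      simpa using (hasDerivAt_pow 2 y).const_mul 8
    exact (hasDerivAt_const y (1:ℝ)).div hd (by positivity)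
  have := (h1.add h2).sub h3
  refine this.congr_deriv ?_
  unfold Fd; field_simp; ring

lemma hasDerivAt_Ld {y : ℝ} : HasDerivAt Ld (Ldd y) y := by
  have h1 : HasDerivAt (fun y : ℝ => 2 * (1 - y ^ 2)) (2 * (-(2 * y))) y := by
    simpa using ((hasDerivAt_pow 2 y).const_sub 1).const_mul 2
  have h2 : HasDerivAt (fun y : ℝ => (1 + y ^ 2) ^ 2) (2 * (1 + y ^ 2) * (2 * y)) y := by
    have := ((hasDerivAt_pow 2 y).const_add 1).pow 2
    exact this.congr_deriv (by simp)
  have := h1.div h2 (by positivity)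
  refine this.congr_deriv ?_
  unfold Ldd; field_simp; ring

lemma hasDerivAt_Fd {y : ℝ} (hy : y ≠ 0) : HasDerivAt Fd (Fdd y) y := by
  have h1 : HasDerivAt (fun y : ℝ => (1 + y ^ 2) ^ 2) (2 * (1 + y ^ 2) * (2 * y)) y := by
    have := ((hasDerivAt_pow 2 y).const_add 1).pow 2
    exact this.congr_deriv (by simp)
  have h2 : HasDerivAt (fun y : ℝ => 4 * y ^ 3) (4 * (3 * y ^ 2)) y := by
    simpa using (hasDerivAt_pow 3 y).const_mul 4
  have := h1.div h2 (by positivity)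
  refine this.congr_deriv ?_
  unfold Fdd; field_simp; ring

lemma hasDerivAt_Gam {y : ℝ} (hy : y ≠ 0) : HasDerivAt Gam (G1 y) y :=
  (hasDerivAt_LamQ y).mul (hasDerivAt_Ffun hy)

lemma hasDerivAt_G1 {y : ℝ} (hy : y ≠ 0) : HasDerivAt G1 (G2 y) y :=
  (hasDerivAt_Ld.mul (hasDerivAt_Ffun hy)).add ((hasDerivAt_LamQ y).mul (hasDerivAt_Fd hy))

lemma derivGam_eq {y : ℝ} (hy : 0 < y) : deriv Gam y = G1 y :=
  (hasDerivAt_Gam hy.ne').deriv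

lemma derivderivGam_eq {y : ℝ} (hy : 0 < y) : deriv (deriv Gam) y = G2 y := by
  have hev : deriv Gam =ᶠ[nhds y] G1 := by
    filter_upwards [eventually_ne_nhds hy.ne'] with z hz
    exact (hasDerivAt_Gam hz).deriv
  rw [hev.deriv_eq]
  exact (hasDerivAt_G1 hy.ne').deriv

lemma part2 : ∀ y > (0:ℝ),
    -(deriv (deriv Gam) y) - (1 / y) * deriv Gam y + Vfun y * Gam y / y ^ 2 = 0 := by
  intro y hy
  rw [derivGam_eq hy, derivderivGam_eq hy]
  have h1 : (1 + y ^ 2) ≠ 0 := by positivity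
  have h2 : y ≠ 0 := hy.ne'
  unfold G2 G1 Ldd Ld Fdd Fd Ffun LamQ Vfun Gam
  field_simp
  ring

lemma part5 : ∀ y > (0:ℝ), LamQ y * deriv Gam y - deriv LamQ y * Gam y = 1 / y := by
  intro y hy
  rw [derivGam_eq hy, (hasDerivAt_LamQ y).deriv]
  have h1 : (1 + y ^ 2) ≠ 0 := by positivity
  have h2 : y ≠ 0 := hy.ne'
  unfold G1 Ld Fd Ffun LamQ Gam
  field_simp
  ring

lemma part1 : ∀ y > (0:ℝ), Gam y = LamQ y * ∫ x in (1:ℝ)..y, 1 / (x * (LamQ x) ^ 2) := by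
  intro y hy
  have hpos : ∀ x ∈ Set.uIcc (1:ℝ) y, 0 < x := by
    intro x hx
    have h1 : min 1 y ≤ x := hx.1
    have : (0:ℝ) < min 1 y := lt_min one_pos hy
    linarith
  have hderiv : ∀ x ∈ Set.uIcc (1:ℝ) y,
      HasDerivAt Ffun (1 / (x * (LamQ x) ^ 2)) x := by
    intro x hx
    have hx0 := (hpos x hx).ne'
    have := hasDerivAt_Ffun hx0
    convert this using 1
    unfold LamQ Fd
    have h1 : (1 + x ^ 2) ≠ 0 := by positivity
    field_simp
    ring
  have hcont : ContinuousOn (fun x : ℝ => 1 / (x * (LamQ x) ^ 2)) (Set.uIcc 1 y) := by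
    apply ContinuousOn.div continuousOn_const
    · apply ContinuousOn.mul continuousOn_id
      apply ContinuousOn.pow
      unfold LamQ
      exact ((continuous_const.mul continuous_id).continuousOn).div
        (by fun_prop) (fun x _ => by positivity)
    · intro x hx
      have := hpos x hx
      have hL : 0 < LamQ x := by unfold LamQ; positivity
      positivity
  have hint := intervalIntegral.integral_eq_sub_of_hasDerivAt hderiv
    (hcont.intervalIntegrable)
  rw [hint]
  have hF1 : Ffun 1 = 0 := by unfold Ffun; simp
  rw [hF1, sub_zero]
  rfl

lemma part3 : Asymptotics.IsBigO (nhdsWithin 0 (Set.Ioi 0)) Gam (fun y => 1 / y) := by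
  rw [isBigO_iff]
  refine ⟨2, ?_⟩
  have h1 : ∀ᶠ y in nhdsWithin (0:ℝ) (Set.Ioi 0), |y| < 1/2 :=
    Filter.Eventually.filter_mono nhdsWithin_le_nhds
      (by simpa using eventually_abs_sub_lt (0:ℝ) (by norm_num : (0:ℝ) < 1/2))
  simp only [Real.norm_eq_abs]
  filter_upwards [h1, self_mem_nhdsWithin] with y hy2 hy0
  have hy : 0 < y := hy0
  have hylt : y < 1/2 := lt_of_le_of_lt (le_abs_self y) hy2
  have hy1 : y < 1 := by linarith
  have hne : y ≠ 0 := hy.ne'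
  -- |log y| ≤ 1/y
  have hlog0 : Real.log y ≤ 0 := Real.log_nonpos hy.le hy1.le
  have hlogbd : |Real.log y| ≤ 1 / y := by
    rw [abs_of_nonpos hlog0]
    have := Real.log_le_sub_one_of_pos (show (0:ℝ) < y⁻¹ by positivity)
    rw [Real.log_inv] at this
    rw [one_div]
    linarith
  have hylog : y * |Real.log y| ≤ 1 := by
    have := mul_le_mul_of_nonneg_left hlogbd hy.le
    rwa [mul_one_div, div_self hne] at this
  -- bound Gam
  have habs : |Gam y| ≤ 2 * y * (y ^ 2 / 8 + |Real.log y| / 2 + 1 / (8 * y ^ 2)) := by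
    unfold Gam
    rw [abs_mul]
    have hb1 : |2 * y / (1 + y ^ 2)| ≤ 2 * y := by
      rw [abs_of_pos (by positivity)]
      apply div_le_self (by positivity)
      nlinarith
    have hb2 : |y ^ 2 / 8 + Real.log y / 2 - 1 / (8 * y ^ 2)|
        ≤ y ^ 2 / 8 + |Real.log y| / 2 + 1 / (8 * y ^ 2) := by
      have := abs_sub (y ^ 2 / 8 + Real.log y / 2) (1 / (8 * y ^ 2))
      have h3 := abs_add_le (y ^ 2 / 8) (Real.log y / 2)
      rw [abs_of_nonneg (by positivity : (0:ℝ) ≤ y ^ 2 / 8)] at h3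
      rw [abs_of_nonneg (by positivity : (0:ℝ) ≤ 1 / (8 * y ^ 2))] at this
      have h4 : |Real.log y / 2| = |Real.log y| / 2 := by
        rw [abs_div]; norm_num
      rw [h4] at h3
      calc |y ^ 2 / 8 + Real.log y / 2 - 1 / (8 * y ^ 2)|
          ≤ |y ^ 2 / 8 + Real.log y / 2| + 1 / (8 * y ^ 2) := this
        _ ≤ y ^ 2 / 8 + |Real.log y| / 2 + 1 / (8 * y ^ 2) := by linarith
    calc |2 * y / (1 + y ^ 2)| * |y ^ 2 / 8 + Real.log y / 2 - 1 / (8 * y ^ 2)|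
        ≤ (2 * y) * (y ^ 2 / 8 + |Real.log y| / 2 + 1 / (8 * y ^ 2)) :=
        mul_le_mul hb1 hb2 (abs_nonneg _) (by positivity)
      _ = 2 * y * (y ^ 2 / 8 + |Real.log y| / 2 + 1 / (8 * y ^ 2)) := by ring
  refine habs.trans ?_
  rw [abs_of_pos (by positivity : (0:ℝ) < 1 / y)]
  have e : 2 * y * (y ^ 2 / 8 + |Real.log y| / 2 + 1 / (8 * y ^ 2))
      = (2 * (y ^ 4 / 8 + y ^ 2 * |Real.log y| / 2 + 1 / 8)) * (1 / y) := by
    field_simp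
  rw [e]
  have hkey : y ^ 4 / 8 + y ^ 2 * |Real.log y| / 2 + 1 / 8 ≤ 1 := by
    have h5 : y ^ 2 * |Real.log y| ≤ y := by
      have := mul_le_mul_of_nonneg_left hylog hy.le
      nlinarith
    have hy4 : y ^ 4 ≤ (1/2:ℝ) ^ 4 := by
      apply pow_le_pow_left₀ hy.le (by linarith)
    norm_num at hy4
    linarith
  have : (0:ℝ) ≤ 1 / y := by positivity
  nlinarith

lemma part4 : Asymptotics.IsBigO Filter.atTop (fun y => Gam y - y / 4)
    (fun y => Real.log y / y) := by
  rw [isBigO_iff]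
  refine ⟨3, ?_⟩
  simp only [Real.norm_eq_abs]
  filter_upwards [eventually_ge_atTop (2:ℝ)] with y hy2
  have hy : (0:ℝ) < y := by linarith
  have hne : y ≠ 0 := hy.ne'
  have h1 : (1 + y ^ 2) ≠ 0 := by positivity
  have hlogpos : 0 < Real.log y := Real.log_pos (by linarith)
  have hlog2 : (1/2 : ℝ) ≤ Real.log y := by
    have h2 : Real.log 2 ≤ Real.log y := Real.log_le_log (by norm_num) hy2
    nlinarith [Real.log_two_gt_d9]
  have e : Gam y - y / 4 = (y * Real.log y - y / 4 - 1 / (4 * y)) / (1 + y ^ 2) := by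
    unfold Gam; field_simp; ring
  rw [e]
  have habs2 : |Real.log y / y| = Real.log y / y := abs_of_pos (by positivity)
  rw [habs2, abs_div, abs_of_pos (by positivity : (0:ℝ) < 1 + y ^ 2)]
  have hnum : |y * Real.log y - y / 4 - 1 / (4 * y)|
      ≤ y * Real.log y + y / 4 + 1 / (4 * y) := by
    rw [abs_le]
    constructor
    · have : (0:ℝ) < y * Real.log y := by positivity
      nlinarith [show (0:ℝ) < 1 / (4 * y) by positivity]
    · nlinarith [show (0:ℝ) < 1 / (4 * y) by positivity]
  calc |y * Real.log y - y / 4 - 1 / (4 * y)| / (1 + y ^ 2)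
      ≤ (y * Real.log y + y / 4 + 1 / (4 * y)) / (1 + y ^ 2) := by gcongr
    _ ≤ 3 * (Real.log y / y) := by
        rw [div_le_iff₀ (by positivity)]
        have e2 : 3 * (Real.log y / y) * (1 + y ^ 2)
            = (3 * Real.log y * (1 + y ^ 2)) / y := by ring
        rw [e2, le_div_iff₀ hy]
        have e3 : (y * Real.log y + y / 4 + 1 / (4 * y)) * y
            = y ^ 2 * Real.log y + y ^ 2 / 4 + 1 / 4 := by field_simp
        rw [e3]
        nlinarith [hlog2, hy2]

/-- Properties of `Γ`: integral representation, `HΓ = 0`, asymptotics at `0` and `∞`,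
and the Wronskian identity `ΛQ Γ' - ΛQ' Γ = 1/y`. -/
theorem Gamma_properties :
    (∀ y > (0:ℝ), Gam y = LamQ y * ∫ x in (1:ℝ)..y, 1 / (x * (LamQ x) ^ 2)) ∧
    (∀ y > (0:ℝ),
      -(deriv (deriv Gam) y) - (1 / y) * deriv Gam y + Vfun y * Gam y / y ^ 2 = 0) ∧
    Asymptotics.IsBigO (nhdsWithin 0 (Set.Ioi 0)) Gam (fun y => 1 / y) ∧
    Asymptotics.IsBigO Filter.atTop (fun y => Gam y - y / 4) (fun y => Real.log y / y) ∧
    (∀ y > (0:ℝ), LamQ y * deriv Gam y - deriv LamQ y * Gam y = 1 / y) := by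
  exact ⟨part1, part2, part3, part4, part5⟩
end

section
/- Let ΛQ(y) = 2y/(1+y²), A the operator (Au)(y) = −u'(y) + Z(y)u(y)/y with Z(y) = (1−y²)/(1+y²), and for continuous f : [0,∞) → ℝ let (H⁻¹f)(y) = ΛQ(y) ∫₀^y fΓ x dx − Γ(y) ∫₀^y fΛQ x dx, with Γ(y) = (2y/(1+y²))·(y²/8 + (log y)/2 − 1/(8y²)). Then for all y > 0: (i) (A H⁻¹f)(y) = (1/(y·ΛQ(y))) ∫₀^y f(x)·ΛQ(x)· x dx; (ii) (H⁻¹f)(y) = −ΛQ(y) ∫₀^y (A H⁻¹f)(x)/ΛQ(x) dx; (iii) for y ≥ 1, |(A H⁻¹f)(y)| ≤ ∫₀^y |f(x)| dx. -/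
open Real MeasureTheory intervalIntegral

/-- The inverse `H⁻¹f` given by variation of parameters. -/
noncomputable def Hinv (f : ℝ → ℝ) (y : ℝ) : ℝ :=
  LamQ y * (∫ x in (0:ℝ)..y, f x * Gam x * x) - Gam y * (∫ x in (0:ℝ)..y, f x * LamQ x * x)

open MeasureTheory intervalIntegral in
noncomputable def rhoAux (y : ℝ) : ℝ := y ^ 2 / 8 + Real.log y / 2 - 1 / (8 * y ^ 2)

lemma Gam_eq (y : ℝ) : Gam y = LamQ y * rhoAux y := rfl

lemma hasDerivAt_LamQ_s9 (y : ℝ) : HasDerivAt LamQ (2 * (1 - y ^ 2) / (1 + y ^ 2) ^ 2) y := by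
  have h0 : (1 : ℝ) + y ^ 2 ≠ 0 := by positivity
  have h1 : HasDerivAt (fun y : ℝ => 2 * y) 2 y := by
    simpa using (hasDerivAt_id y).const_mul (2 : ℝ)
  have h2 : HasDerivAt (fun y : ℝ => 1 + y ^ 2) (2 * y) y := by
    simpa using ((hasDerivAt_pow 2 y).const_add (1 : ℝ))
  have := h1.div h2 h0
  refine this.congr_deriv ?_
  field_simp
  ring

lemma continuous_LamQ : Continuous LamQ :=
  continuous_iff_continuousAt.2 fun y => (hasDerivAt_LamQ_s9 y).continuousAt

lemma hasDerivAt_rhoAux {y : ℝ} (hy : 0 < y) :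
    HasDerivAt rhoAux ((1 + y ^ 2) ^ 2 / (4 * y ^ 3)) y := by
  have hy0 : y ≠ 0 := hy.ne'
  have h1 : HasDerivAt (fun y : ℝ => y ^ 2 / 8) (y / 4) y := by
    have := (hasDerivAt_pow 2 y).div_const 8
    refine this.congr_deriv ?_
    push_cast
    ring
  have h2 : HasDerivAt (fun y : ℝ => Real.log y / 2) (1 / (2 * y)) y := by
    have := (Real.hasDerivAt_log hy0).div_const 2
    refine this.congr_deriv ?_
    field_simp
  have h3 : HasDerivAt (fun y : ℝ => 1 / (8 * y ^ 2)) (-(1 / (4 * y ^ 3))) y := by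
    have hden : HasDerivAt (fun y : ℝ => 8 * y ^ 2) (16 * y) y := by
      have := (hasDerivAt_pow 2 y).const_mul (8 : ℝ)
      refine this.congr_deriv ?_
      push_cast
      ring
    have := (hasDerivAt_const y (1 : ℝ)).div hden (by positivity)
    refine this.congr_deriv ?_
    field_simp
    ring
  have := (h1.add h2).sub h3
  refine this.congr_deriv ?_
  field_simp
  ring

lemma abs_log_le {x : ℝ} (hx : 0 < x) : |Real.log x| ≤ x + 1 / x := by
  have h1 : Real.log x ≤ x - 1 := Real.log_le_sub_one_of_pos hx
  have h2 : Real.log x⁻¹ ≤ x⁻¹ - 1 := Real.log_le_sub_one_of_pos (by positivity)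
  rw [Real.log_inv] at h2
  have hxi : 0 < 1 / x := by positivity
  rw [abs_le]
  have hinv : x⁻¹ = 1 / x := by rw [one_div]
  rw [hinv] at h2
  constructor <;> nlinarith

lemma hasDerivAt_Gam_s9 {y : ℝ} (hy : 0 < y) :
    HasDerivAt Gam
      (2 * (1 - y ^ 2) / (1 + y ^ 2) ^ 2 * rhoAux y + LamQ y * ((1 + y ^ 2) ^ 2 / (4 * y ^ 3)))
      y := by
  have h : Gam = fun y => LamQ y * rhoAux y := rfl
  rw [h]
  exact (hasDerivAt_LamQ_s9 y).mul (hasDerivAt_rhoAux hy)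

lemma continuousOn_Gam : ContinuousOn Gam (Set.Ioi 0) := fun x hx =>
  (hasDerivAt_Gam_s9 hx).continuousAt.continuousWithinAt

lemma abs_rhoAux_le {x : ℝ} (hx : 0 < x) :
    |rhoAux x| ≤ x ^ 2 / 8 + (x + 1 / x) / 2 + 1 / (8 * x ^ 2) := by
  have hl := abs_log_le hx
  have h1 := le_abs_self (Real.log x)
  have h2 := neg_abs_le (Real.log x)
  have h3 : (0:ℝ) < 8 * x ^ 2 := by positivity
  rw [rhoAux, abs_le]
  constructor <;> nlinarith [sq_nonneg x, one_div_pos.2 h3]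

lemma abs_Gam_mul_le {x y : ℝ} (hx : 0 < x) (hxy : x ≤ y) :
    |Gam x * x| ≤ y ^ 4 / 4 + y ^ 3 + y + 1 / 4 := by
  have hG : Gam x * x = 2 * x ^ 2 / (1 + x ^ 2) * rhoAux x := by
    rw [Gam_eq, LamQ]; ring
  have hden : (0:ℝ) < 1 + x ^ 2 := by positivity
  have habs : |Gam x * x| = 2 * x ^ 2 / (1 + x ^ 2) * |rhoAux x| := by
    rw [hG, abs_mul, abs_of_nonneg (by positivity)]
  have hfac : 2 * x ^ 2 / (1 + x ^ 2) ≤ 2 * x ^ 2 := by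
    rw [div_le_iff₀ hden]; nlinarith [sq_nonneg x]
  have hr := abs_rhoAux_le hx
  have hbd : |Gam x * x| ≤ 2 * x ^ 2 * (x ^ 2 / 8 + (x + 1 / x) / 2 + 1 / (8 * x ^ 2)) := by
    rw [habs]
    exact mul_le_mul hfac hr (abs_nonneg _) (by positivity)
  have heq : 2 * x ^ 2 * (x ^ 2 / 8 + (x + 1 / x) / 2 + 1 / (8 * x ^ 2))
      = x ^ 4 / 4 + x ^ 3 + x + 1 / 4 := by
    field_simp
    ring
  rw [heq] at hbd
  refine hbd.trans ?_
  nlinarith [pow_le_pow_left₀ hx.le hxy 4, pow_le_pow_left₀ hx.le hxy 3]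

set_option maxHeartbeats 2000000 in
/-- Representations of `A H⁻¹ f` and `H⁻¹ f`, and the pointwise bound
`|A H⁻¹ f(y)| ≤ ∫₀^y |f|` for `y ≥ 1`. -/
theorem AHinv_representations (f : ℝ → ℝ) (hf : ContinuousOn f (Set.Ici 0)) :
    (∀ y > (0:ℝ),
      Aop (Hinv f) y = (1 / (y * LamQ y)) * ∫ x in (0:ℝ)..y, f x * LamQ x * x) ∧
    (∀ y > (0:ℝ),
      Hinv f y = -LamQ y * ∫ x in (0:ℝ)..y, Aop (Hinv f) x / LamQ x) ∧
    (∀ y ≥ (1:ℝ), |Aop (Hinv f) y| ≤ ∫ x in (0:ℝ)..y, |f x|) := by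
  set V : ℝ → ℝ := fun y => ∫ x in (0:ℝ)..y, f x * LamQ x * x with hVdef
  set W : ℝ → ℝ := fun y => ∫ x in (0:ℝ)..y, f x * Gam x * x with hWdef
  -- continuity of f at positive points
  have hfc : ∀ {x : ℝ}, 0 < x → ContinuousAt f x := fun hx =>
    hf.continuousAt (Ici_mem_nhds hx)
  -- continuity of integrands
  have hcV : ContinuousOn (fun x => f x * LamQ x * x) (Set.Ici 0) :=
    (hf.mul continuous_LamQ.continuousOn).mul continuousOn_id
  have hcW : ContinuousOn (fun x => f x * Gam x * x) (Set.Ioi 0) :=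
    ((hf.mono Set.Ioi_subset_Ici_self).mul continuousOn_Gam).mul continuousOn_id
  -- bounds on f on compacts
  have hM : ∀ y : ℝ, ∃ M : ℝ, 0 ≤ M ∧ ∀ x ∈ Set.Icc (0:ℝ) y, |f x| ≤ M := by
    intro y
    rcases isCompact_Icc.exists_bound_of_continuousOn (hf.mono Set.Icc_subset_Ici_self) with ⟨M, hMb⟩
    rcases le_or_gt 0 y with hy | hy
    · exact ⟨M, (abs_nonneg (f 0)).trans (by simpa using hMb 0 ⟨le_refl 0, hy⟩),
        fun x hx => by simpa using hMb x hx⟩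
    · exact ⟨0, le_refl 0, fun x hx => absurd (hx.1.trans hx.2) (not_le.2 hy)⟩
  -- interval integrability of the V-integrand
  have hIV : ∀ y : ℝ, 0 ≤ y → IntervalIntegrable (fun x => f x * LamQ x * x) volume 0 y := by
    intro y hy
    refine (hcV.mono ?_).intervalIntegrable
    rw [Set.uIcc_of_le hy]
    exact Set.Icc_subset_Ici_self
  -- interval integrability of the W-integrand
  have hIW : ∀ y : ℝ, 0 ≤ y → IntervalIntegrable (fun x => f x * Gam x * x) volume 0 y := by
    intro y hy
    rcases hM y with ⟨M, hM0, hMb⟩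
    rw [intervalIntegrable_iff_integrableOn_Ioc_of_le hy]
    refine ⟨(hcW.mono Set.Ioc_subset_Ioi_self).aestronglyMeasurable measurableSet_Ioc, ?_⟩
    refine HasFiniteIntegral.restrict_of_bounded (C := M * (y ^ 4 / 4 + y ^ 3 + y + 1 / 4))
      measure_Ioc_lt_top ?_
    rw [ae_restrict_iff' measurableSet_Ioc]
    refine ae_of_all _ fun x hx => ?_
    have hx0 : 0 < x := hx.1
    have hxy : x ≤ y := hx.2
    have : ‖f x * Gam x * x‖ = |f x| * |Gam x * x| := by
      rw [Real.norm_eq_abs, mul_assoc, abs_mul]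
    rw [this]
    exact mul_le_mul (hMb x ⟨hx0.le, hxy⟩) (abs_Gam_mul_le hx0 hxy) (abs_nonneg _) hM0
  -- derivative of V at positive points
  have hDV : ∀ {y : ℝ}, 0 < y → HasDerivAt V (f y * LamQ y * y) y := by
    intro y hy
    exact intervalIntegral.integral_hasDerivAt_right (hIV y hy.le)
      ⟨Set.Ici 0, Ici_mem_nhds hy, hcV.aestronglyMeasurable measurableSet_Ici⟩
      (((hfc hy).mul continuous_LamQ.continuousAt).mul continuousAt_id)
  -- derivative of W at positive points
  have hDW : ∀ {y : ℝ}, 0 < y → HasDerivAt W (f y * Gam y * y) y := by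
    intro y hy
    exact intervalIntegral.integral_hasDerivAt_right (hIW y hy.le)
      ⟨Set.Ioi 0, Ioi_mem_nhds hy, hcW.aestronglyMeasurable measurableSet_Ioi⟩
      (hcW.continuousAt (Ioi_mem_nhds hy))
  -- derivative of Hinv f at positive points
  have hDH : ∀ {y : ℝ}, 0 < y →
      HasDerivAt (Hinv f)
        (2 * (1 - y ^ 2) / (1 + y ^ 2) ^ 2 * W y + LamQ y * (f y * Gam y * y)
          - ((2 * (1 - y ^ 2) / (1 + y ^ 2) ^ 2 * rhoAux y
              + LamQ y * ((1 + y ^ 2) ^ 2 / (4 * y ^ 3))) * V y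
            + Gam y * (f y * LamQ y * y))) y := by
    intro y hy
    exact ((hasDerivAt_LamQ_s9 y).mul (hDW hy)).sub ((hasDerivAt_Gam_s9 hy).mul (hDV hy))
  -- key identity (i)
  have key1 : ∀ y : ℝ, 0 < y → Aop (Hinv f) y = (1 + y ^ 2) / (2 * y ^ 2) * V y := by
    intro y hy
    have hy0 : y ≠ 0 := hy.ne'
    have hden : (1:ℝ) + y ^ 2 ≠ 0 := by positivity
    have hD := (hDH hy).deriv
    have hHy : Hinv f y = LamQ y * W y - Gam y * V y := rfl
    simp only [Aop]
    rw [hD, hHy, Gam_eq, Zfun, LamQ]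
    field_simp
    ring
  have hinv_eq : ∀ y : ℝ, 0 < y → 1 / (y * LamQ y) = (1 + y ^ 2) / (2 * y ^ 2) := by
    intro y hy
    have h1 : y * LamQ y = 2 * y ^ 2 / (1 + y ^ 2) := by rw [LamQ]; ring
    rw [h1, one_div_div]
  refine ⟨?_, ?_, ?_⟩
  · intro y hy
    show Aop (Hinv f) y = 1 / (y * LamQ y) * V y
    rw [key1 y hy, hinv_eq y hy]
  · -- part (ii)
    intro y hy
    rcases hM y with ⟨M, hM0, hMb⟩
    set q : ℝ → ℝ := fun x => V x * ((1 + x ^ 2) ^ 2 / (4 * x ^ 3)) with hqdef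
    have hq_eq : ∀ x : ℝ, 0 ≤ x → Aop (Hinv f) x / LamQ x = q x := by
      intro x hx
      rcases eq_or_lt_of_le hx with h0 | h0
      · subst h0
        simp [LamQ, hqdef]
      · have hx0 : x ≠ 0 := h0.ne'
        have hden : (1:ℝ) + x ^ 2 ≠ 0 := by positivity
        rw [key1 x h0]
        simp only [hqdef, LamQ]
        field_simp
        ring
    have hVcont : ContinuousOn V (Set.Ioi 0) := fun x hx =>
      (hDV hx).continuousAt.continuousWithinAt
    have hcq : ContinuousOn q (Set.Ioi 0) := by
      simp only [hqdef]
      refine hVcont.mul (ContinuousOn.div ?_ ?_ fun x hx => ?_)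
      · exact ((continuous_const.add (continuous_pow 2)).pow 2).continuousOn
      · exact (continuous_const.mul (continuous_pow 3)).continuousOn
      · have : (0:ℝ) < x := hx
        positivity
    have habsV : ∀ x : ℝ, 0 ≤ x → x ≤ y → |V x| ≤ 2 * M * x ^ 3 := by
      intro x hx0 hxy
      have hb : ∀ t ∈ Set.uIoc (0:ℝ) x, ‖f t * LamQ t * t‖ ≤ M * (2 * x ^ 2) := by
        intro t ht
        rw [Set.uIoc_of_le hx0] at ht
        have ht0 : 0 < t := ht.1
        have htx : t ≤ x := ht.2
        have hL : LamQ t * t = 2 * t ^ 2 / (1 + t ^ 2) := by rw [LamQ]; ring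
        have hpos : 0 ≤ LamQ t * t := by rw [hL]; positivity
        have h2 : LamQ t * t ≤ 2 * x ^ 2 := by
          rw [hL, div_le_iff₀ (by positivity)]
          nlinarith [mul_self_le_mul_self ht0.le htx, sq_nonneg t, sq_nonneg x]
        rw [Real.norm_eq_abs, mul_assoc, abs_mul, abs_of_nonneg hpos]
        exact mul_le_mul (hMb t ⟨ht0.le, htx.trans hxy⟩) h2 hpos hM0
      have h3 := intervalIntegral.norm_integral_le_of_norm_le_const hb
      rw [sub_zero, abs_of_nonneg hx0, Real.norm_eq_abs] at h3
      calc |V x| ≤ M * (2 * x ^ 2) * x := h3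
        _ = 2 * M * x ^ 3 := by ring
    have habsq : ∀ t : ℝ, 0 < t → t ≤ y → |q t| ≤ M * (1 + t ^ 2) ^ 2 / 2 := by
      intro t ht0 hty
      have hfrac : (0:ℝ) ≤ (1 + t ^ 2) ^ 2 / (4 * t ^ 3) := by positivity
      have h1 : |q t| = |V t| * ((1 + t ^ 2) ^ 2 / (4 * t ^ 3)) := by
        simp only [hqdef]
        rw [abs_mul, abs_of_nonneg hfrac]
      rw [h1]
      have h2 : |V t| * ((1 + t ^ 2) ^ 2 / (4 * t ^ 3))
          ≤ (2 * M * t ^ 3) * ((1 + t ^ 2) ^ 2 / (4 * t ^ 3)) :=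
        mul_le_mul_of_nonneg_right (habsV t ht0.le hty) (by positivity)
      refine h2.trans_eq ?_
      have ht0' : t ≠ 0 := ht0.ne'
      field_simp
      ring
    have hIq : ∀ z : ℝ, 0 ≤ z → z ≤ y → IntervalIntegrable q volume 0 z := by
      intro z hz0 hzy
      rw [intervalIntegrable_iff_integrableOn_Ioc_of_le hz0]
      refine ⟨(hcq.mono Set.Ioc_subset_Ioi_self).aestronglyMeasurable measurableSet_Ioc, ?_⟩
      refine HasFiniteIntegral.restrict_of_bounded (C := M * (1 + y ^ 2) ^ 2 / 2)
        measure_Ioc_lt_top ?_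
      rw [ae_restrict_iff' measurableSet_Ioc]
      refine ae_of_all _ fun x hx => ?_
      rw [Real.norm_eq_abs]
      refine (habsq x hx.1 (hx.2.trans hzy)).trans ?_
      have hsq : x ^ 2 ≤ y ^ 2 := by
        nlinarith [mul_self_le_mul_self hx.1.le (hx.2.trans hzy)]
      have h4 : (0:ℝ) ≤ 2 + x ^ 2 + y ^ 2 := by positivity
      nlinarith [mul_nonneg hM0 (mul_nonneg (sub_nonneg.2 hsq) h4)]
    set Φ : ℝ → ℝ := fun z => ∫ x in (0:ℝ)..z, q x with hΦdef
    have hDΦ : ∀ z : ℝ, 0 < z → z ≤ y → HasDerivAt Φ (q z) z := by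
      intro z hz hzy
      exact intervalIntegral.integral_hasDerivAt_right (hIq z hz.le hzy)
        ⟨Set.Ioi 0, Ioi_mem_nhds hz, hcq.aestronglyMeasurable measurableSet_Ioi⟩
        (hcq.continuousAt (Ioi_mem_nhds hz))
    set E : ℝ → ℝ := fun z => W z - rhoAux z * V z + Φ z with hEdef
    have hDE : ∀ z : ℝ, 0 < z → z ≤ y → HasDerivAt E 0 z := by
      intro z hz hzy
      have h := ((hDW hz).sub ((hasDerivAt_rhoAux hz).mul (hDV hz))).add (hDΦ z hz hzy)
      refine h.congr_deriv ?_
      simp only [hqdef]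
      rw [Gam_eq]
      ring
    have hEconst : ∀ z : ℝ, 0 < z → z ≤ y → E z = E y := by
      intro z hz hzy
      have hcontE : ContinuousOn E (Set.Icc z y) := fun x hx =>
        (hDE x (hz.trans_le hx.1) hx.2).continuousAt.continuousWithinAt
      have h := constant_of_has_deriv_right_zero hcontE
        (fun x hx => (hDE x (hz.trans_le hx.1) hx.2.le).hasDerivWithinAt)
      exact (h y (Set.right_mem_Icc.2 hzy)).symm
    -- bound on W near 0
    have habsW : ∀ x : ℝ, 0 ≤ x → x ≤ y → |W x| ≤ M * (x ^ 4 / 4 + x ^ 3 + x + 1 / 4) * x := by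
      intro x hx0 hxy
      have hb : ∀ t ∈ Set.uIoc (0:ℝ) x, ‖f t * Gam t * t‖
          ≤ M * (x ^ 4 / 4 + x ^ 3 + x + 1 / 4) := by
        intro t ht
        rw [Set.uIoc_of_le hx0] at ht
        have ht0 : 0 < t := ht.1
        have htx : t ≤ x := ht.2
        rw [Real.norm_eq_abs, mul_assoc, abs_mul]
        exact mul_le_mul (hMb t ⟨ht0.le, htx.trans hxy⟩) (abs_Gam_mul_le ht0 htx)
          (abs_nonneg _) hM0
      have h3 := intervalIntegral.norm_integral_le_of_norm_le_const hb
      rw [sub_zero, abs_of_nonneg hx0, Real.norm_eq_abs] at h3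
      exact h3
    have habsΦ : ∀ x : ℝ, 0 ≤ x → x ≤ y → |Φ x| ≤ M * (1 + x ^ 2) ^ 2 / 2 * x := by
      intro x hx0 hxy
      have hb : ∀ t ∈ Set.uIoc (0:ℝ) x, ‖q t‖ ≤ M * (1 + x ^ 2) ^ 2 / 2 := by
        intro t ht
        rw [Set.uIoc_of_le hx0] at ht
        rw [Real.norm_eq_abs]
        refine (habsq t ht.1 (ht.2.trans hxy)).trans ?_
        have hsq : t ^ 2 ≤ x ^ 2 := by
          nlinarith [mul_self_le_mul_self ht.1.le ht.2]
        have h4 : (0:ℝ) ≤ 2 + t ^ 2 + x ^ 2 := by positivity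
        nlinarith [mul_nonneg hM0 (mul_nonneg (sub_nonneg.2 hsq) h4)]
      have h3 := intervalIntegral.norm_integral_le_of_norm_le_const hb
      rw [sub_zero, abs_of_nonneg hx0, Real.norm_eq_abs] at h3
      exact h3
    -- the squeeze function
    set G : ℝ → ℝ := fun x => M * (x ^ 4 / 4 + x ^ 3 + x + 1 / 4) * x
      + M * (x ^ 5 / 4 + x ^ 4 + x ^ 2 + x / 4) + M * (1 + x ^ 2) ^ 2 / 2 * x with hGdef
    have hEG : ∀ x : ℝ, 0 < x → x ≤ y → |E x| ≤ G x := by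
      intro x hx0 hxy
      have h1 : |rhoAux x * V x| ≤ M * (x ^ 5 / 4 + x ^ 4 + x ^ 2 + x / 4) := by
        rw [abs_mul]
        have h2 := mul_le_mul (abs_rhoAux_le hx0) (habsV x hx0.le hxy) (abs_nonneg _)
          (by positivity)
        refine h2.trans_eq ?_
        have hx0' : x ≠ 0 := hx0.ne'
        field_simp
        ring
      have hE1 : |E x| ≤ |W x| + |rhoAux x * V x| + |Φ x| := by
        simp only [hEdef]
        calc |W x - rhoAux x * V x + Φ x| ≤ |W x - rhoAux x * V x| + |Φ x| := abs_add_le _ _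
          _ ≤ |W x| + |rhoAux x * V x| + |Φ x| := by
              have := abs_sub (W x) (rhoAux x * V x)
              linarith [abs_sub_abs_le_abs_sub (W x) (rhoAux x * V x), abs_sub (W x) (rhoAux x * V x)]
      refine hE1.trans ?_
      simp only [hGdef]
      have := habsW x hx0.le hxy
      have := habsΦ x hx0.le hxy
      linarith [h1]
    have hG0 : Filter.Tendsto G (nhdsWithin 0 (Set.Ioi 0)) (nhds 0) := by
      have hGc : Continuous G := by
        simp only [hGdef]
        fun_prop
      have h := hGc.continuousAt (x := (0:ℝ)).tendsto
      have hG00 : G 0 = 0 := by simp [hGdef]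
      rw [hG00] at h
      exact h.mono_left nhdsWithin_le_nhds
    have hE0 : Filter.Tendsto E (nhdsWithin 0 (Set.Ioi 0)) (nhds 0) := by
      refine squeeze_zero_norm' ?_ hG0
      filter_upwards [Ioc_mem_nhdsGT_of_mem ⟨le_rfl, hy⟩] with x hx
      rw [Real.norm_eq_abs]
      exact hEG x hx.1 hx.2
    have hEy0 : E y = 0 := by
      have h2 : Filter.Tendsto E (nhdsWithin 0 (Set.Ioi 0)) (nhds (E y)) := by
        refine Filter.Tendsto.congr' ?_ tendsto_const_nhds
        filter_upwards [Ioc_mem_nhdsGT_of_mem ⟨le_rfl, hy⟩] with x hx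
        exact (hEconst x hx.1 hx.2).symm
      exact tendsto_nhds_unique h2 hE0
    have hEy : W y - rhoAux y * V y + Φ y = 0 := by
      simpa [hEdef] using hEy0
    have hint : (∫ x in (0:ℝ)..y, Aop (Hinv f) x / LamQ x) = Φ y := by
      refine intervalIntegral.integral_congr fun x hx => ?_
      rw [Set.uIcc_of_le hy.le] at hx
      exact hq_eq x hx.1
    rw [hint]
    have hH : Hinv f y = LamQ y * W y - Gam y * V y := rfl
    rw [hH, Gam_eq]
    linear_combination (LamQ y) * hEy
  · -- part (iii)
    intro y hy1
    have hy : (0:ℝ) < y := lt_of_lt_of_le one_pos hy1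
    have hynn : (0:ℝ) ≤ y := hy.le
    rw [key1 y hy]
    have hc : (0:ℝ) ≤ (1 + y ^ 2) / (2 * y ^ 2) := by positivity
    rw [abs_mul, abs_of_nonneg hc]
    have habs : |V y| ≤ ∫ x in (0:ℝ)..y, |f x| * (LamQ x * x) := by
      have h1 : |V y| ≤ ∫ x in (0:ℝ)..y, |f x * LamQ x * x| := by
        exact intervalIntegral.abs_integral_le_integral_abs hynn
      refine h1.trans_eq (intervalIntegral.integral_congr fun x hx => ?_)
      rw [Set.uIcc_of_le hynn] at hx
      have hx0 : 0 ≤ x := hx.1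
      have hL : 0 ≤ LamQ x := by rw [LamQ]; positivity
      rw [mul_assoc, abs_mul, abs_of_nonneg (mul_nonneg hL hx0)]
    have step : (1 + y ^ 2) / (2 * y ^ 2) * |V y|
        ≤ ∫ x in (0:ℝ)..y, (1 + y ^ 2) / (2 * y ^ 2) * (|f x| * (LamQ x * x)) := by
      rw [intervalIntegral.integral_const_mul]
      exact mul_le_mul_of_nonneg_left habs hc
    refine step.trans ?_
    refine intervalIntegral.integral_mono_on hynn ?_ ?_ fun x hx => ?_
    · have hcont : ContinuousOn
          (fun x => (1 + y ^ 2) / (2 * y ^ 2) * (|f x| * (LamQ x * x))) (Set.Icc 0 y) :=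
        continuousOn_const.mul (((hf.mono Set.Icc_subset_Ici_self).abs).mul
          (continuous_LamQ.continuousOn.mul continuousOn_id))
      refine ContinuousOn.intervalIntegrable ?_
      rw [Set.uIcc_of_le hynn]
      exact hcont
    · refine ((hf.mono ?_).abs).intervalIntegrable
      rw [Set.uIcc_of_le hynn]; exact Set.Icc_subset_Ici_self
    · have hx0 : 0 ≤ x := hx.1
      have hxy : x ≤ y := hx.2
      have hkey : (1 + y ^ 2) / (2 * y ^ 2) * (LamQ x * x) ≤ 1 := by
        rw [LamQ]
        have h1 : (1 + y ^ 2) / (2 * y ^ 2) * (2 * x / (1 + x ^ 2) * x)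
            = (x ^ 2 * (1 + y ^ 2)) / (y ^ 2 * (1 + x ^ 2)) := by
          field_simp
        rw [h1, div_le_one (by positivity)]
        nlinarith [mul_self_le_mul_self hx0 hxy]
      calc (1 + y ^ 2) / (2 * y ^ 2) * (|f x| * (LamQ x * x))
          = |f x| * ((1 + y ^ 2) / (2 * y ^ 2) * (LamQ x * x)) := by ring
        _ ≤ |f x| * 1 := mul_le_mul_of_nonneg_left hkey (abs_nonneg _)
        _ = |f x| := mul_one _
end

section
/- Let Z(y) = (1−y²)/(1+y²), V(y) = (y⁴−6y²+1)/(1+y²)², (Au)(y) = −u'(y) + Z(y)u(y)/y, (Hu)(y) = −u''(y) − (1/y)u'(y) + V(y)u(y)/y², and (Λg)(y) = y·g'(y). Then for every sufficiently differentiable f : (0,∞) → ℝ and all y > 0 the commutator identities hold: A(Λf) = Af + Λ(Af) − (ΛZ/y)·f, i.e. (A(Λf))(y) = (Af)(y) + y·(Af)'(y) − Z'(y)·f(y); and H(Λf) = 2Hf + Λ(Hf) − (ΛV/y²)·f, i.e. (H(Λf))(y) = 2(Hf)(y) + y·(Hf)'(y) − (V'(y)/y)·f(y). -/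
open Real

/-- The linearized operator `(Hu)(y) = -u'' - u'/y + V u/y²`. -/
noncomputable def Hop (u : ℝ → ℝ) : ℝ → ℝ :=
  fun y => -(deriv (deriv u) y) - (1 / y) * deriv u y + Vfun y * u y / y ^ 2

lemma Zfun_diff (y : ℝ) : DifferentiableAt ℝ Zfun y := by
  have h : (1:ℝ) + y ^ 2 ≠ 0 := by positivity
  unfold Zfun
  exact DifferentiableAt.div (by fun_prop) (by fun_prop) h

lemma Vfun_diff (y : ℝ) : DifferentiableAt ℝ Vfun y := by
  have h : ((1:ℝ) + y ^ 2) ^ 2 ≠ 0 := by positivity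
  unfold Vfun
  exact DifferentiableAt.div (by fun_prop) (by fun_prop) h

/-- Commutator identities of `A` and `H` with the scaling generator `Λf = y f'`:
`A(Λf) = Af + Λ(Af) - (ΛZ/y) f` and `H(Λf) = 2Hf + Λ(Hf) - (ΛV/y²) f`. -/
theorem commutator_identities (f : ℝ → ℝ) (hf : ContDiffOn ℝ 3 f (Set.Ioi 0)) :
    (∀ y > (0:ℝ),
      Aop (fun x => x * deriv f x) y
        = Aop f y + y * deriv (Aop f) y - deriv Zfun y * f y) ∧
    (∀ y > (0:ℝ),
      Hop (fun x => x * deriv f x) y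
        = 2 * Hop f y + y * deriv (Hop f) y - (deriv Vfun y / y) * f y) := by
  have hS : IsOpen (Set.Ioi (0:ℝ)) := isOpen_Ioi
  have hf1 : ContDiffOn ℝ 2 (deriv f) (Set.Ioi 0) := hf.deriv_of_isOpen hS (by norm_num)
  have hf2 : ContDiffOn ℝ 1 (deriv (deriv f)) (Set.Ioi 0) := hf1.deriv_of_isOpen hS (by norm_num)
  have df : ∀ x ∈ Set.Ioi (0:ℝ), DifferentiableAt ℝ f x := fun x hx =>
    ((hf.differentiableOn (by norm_num)).differentiableAt (hS.mem_nhds hx))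
  have df1 : ∀ x ∈ Set.Ioi (0:ℝ), DifferentiableAt ℝ (deriv f) x := fun x hx =>
    ((hf1.differentiableOn (by norm_num)).differentiableAt (hS.mem_nhds hx))
  have df2 : ∀ x ∈ Set.Ioi (0:ℝ), DifferentiableAt ℝ (deriv (deriv f)) x := fun x hx =>
    ((hf2.differentiableOn (by norm_num)).differentiableAt (hS.mem_nhds hx))
  constructor
  · intro y hy
    have hy0 : y ≠ 0 := ne_of_gt hy
    have hb : HasDerivAt f (deriv f y) y := (df y hy).hasDerivAt
    have hc : HasDerivAt (deriv f) (deriv (deriv f) y) y := (df1 y hy).hasDerivAt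
    have hZd : HasDerivAt Zfun (deriv Zfun y) y := (Zfun_diff y).hasDerivAt
    -- derivative of Λf = x * f'
    have hΛ : HasDerivAt (fun x => x * deriv f x)
        (1 * deriv f y + y * deriv (deriv f) y) y := (hasDerivAt_id y).mul hc
    -- derivative of Aop f
    have hA : HasDerivAt (fun x => -deriv f x + Zfun x * f x / x)
        (-(deriv (deriv f) y) +
          ((deriv Zfun y * f y + Zfun y * deriv f y) * y - Zfun y * f y * 1) / y ^ 2) y :=
      hc.neg.add ((hZd.mul hb).div (hasDerivAt_id y) hy0)
    have hAeq : Aop f = fun x => -deriv f x + Zfun x * f x / x := rfl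
    simp only [Aop, hAeq]
    rw [hΛ.deriv, hA.deriv]
    field_simp
    ring
  · intro y hy
    have hy0 : y ≠ 0 := ne_of_gt hy
    have hb : HasDerivAt f (deriv f y) y := (df y hy).hasDerivAt
    have hc : HasDerivAt (deriv f) (deriv (deriv f) y) y := (df1 y hy).hasDerivAt
    have hd : HasDerivAt (deriv (deriv f)) (deriv (deriv (deriv f)) y) y := (df2 y hy).hasDerivAt
    have hVd : HasDerivAt Vfun (deriv Vfun y) y := (Vfun_diff y).hasDerivAt
    have hΛ : HasDerivAt (fun x => x * deriv f x)
        (1 * deriv f y + y * deriv (deriv f) y) y := (hasDerivAt_id y).mul hc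
    -- deriv (Λf) agrees with f' + x f'' near y
    have hev : deriv (fun x => x * deriv f x) =ᶠ[nhds y]
        (fun x => deriv f x + x * deriv (deriv f) x) := by
      filter_upwards [hS.mem_nhds hy] with x hx
      have : deriv (fun x => x * deriv f x) x = 1 * deriv f x + x * deriv (deriv f) x :=
        ((hasDerivAt_id x).mul ((df1 x hx).hasDerivAt)).deriv
      simpa using this
    have hΛ2 : deriv (deriv (fun x => x * deriv f x)) y
        = deriv (deriv f) y + (1 * deriv (deriv f) y + y * deriv (deriv (deriv f)) y) := by
      rw [hev.deriv_eq]
      exact (hc.add ((hasDerivAt_id y).mul hd)).deriv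
    -- derivative of Hop f
    have hinv : HasDerivAt (fun x : ℝ => 1 / x) ((0 * y - 1 * 1) / y ^ 2) y :=
      (hasDerivAt_const y 1).div (hasDerivAt_id y) hy0
    have hH : HasDerivAt
        (fun x => -(deriv (deriv f) x) - (1 / x) * deriv f x + Vfun x * f x / x ^ 2)
        (-(deriv (deriv (deriv f)) y)
          - ((0 * y - 1 * 1) / y ^ 2 * deriv f y + 1 / y * deriv (deriv f) y)
          + ((deriv Vfun y * f y + Vfun y * deriv f y) * y ^ 2
              - Vfun y * f y * ((2:ℕ) * y ^ (2 - 1))) / (y ^ 2) ^ 2) y :=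
      (hd.neg.sub (hinv.mul hc)).add
        ((hVd.mul hb).div (hasDerivAt_pow 2 y) (pow_ne_zero 2 hy0))
    have hHeq : Hop f
        = fun x => -(deriv (deriv f) x) - (1 / x) * deriv f x + Vfun x * f x / x ^ 2 := rfl
    simp only [Hop, hHeq]
    rw [hΛ.deriv, hΛ2, hH.deriv]
    field_simp
    ring
end

section
/- Let ℓ ≥ 2 be an integer and define sequences (c_k)_{1≤k≤ℓ}, (d_k)_{1≤k≤ℓ} by c₁ = ℓ/(ℓ−1), c_{k+1} = −((ℓ−k)/(ℓ−1))·c_k for 1 ≤ k ≤ ℓ−1; d₁ = −ℓ/(ℓ−1)², d₂ = −d₁ + c₁²/2, and d_{k+1} = −((ℓ−k)/(ℓ−1))·d_k + (ℓ(ℓ−k)/(ℓ−1)²)·c_k for 2 ≤ k ≤ ℓ−1. Define b_k^e(s) = c_k/s^k + d_k/(s^k log s) for 1 ≤ k ≤ ℓ and b_k^e ≡ 0 for k > ℓ. Then for every integer L ≥ ℓ and every 1 ≤ k ≤ L, as s → +∞: (b_k^e)'(s) + (k − 1 + 1/((1+δ_{1k}) log s))·b₁^e(s)·b_k^e(s)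 − b_{k+1}^e(s) = O( 1/(s^{k+1}(log s)²) ), where b_{L+1}^e := 0 and δ_{1k} is the Kronecker delta. -/
open Real Filter Asymptotics

lemma deriv_aux_special (k : ℕ) (hk : 1 ≤ k) (a b s : ℝ) (hs : 1 < s) :
    HasDerivAt (fun x : ℝ => a / x ^ k + b / (x ^ k * Real.log x))
      (-(k:ℝ) * a / s ^ (k+1)
        - b * ((k:ℝ) * Real.log s + 1) / (s ^ (k+1) * (Real.log s)^2)) s := by
  obtain ⟨m, rfl⟩ : ∃ m, k = m + 1 := ⟨k - 1, by omega⟩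
  have hs0 : s ≠ 0 := (by linarith : (0:ℝ) < s).ne'
  have hlogpos : 0 < Real.log s := Real.log_pos hs
  have hlog : Real.log s ≠ 0 := hlogpos.ne'
  have hpow : s ^ (m+1) ≠ 0 := pow_ne_zero _ hs0
  have h1 : HasDerivAt (fun x : ℝ => x ^ (m+1)) (((m:ℝ)+1) * s ^ m) s := by
    simpa using hasDerivAt_pow (m+1) s
  have h2 : HasDerivAt Real.log s⁻¹ s := Real.hasDerivAt_log hs0
  have hA : HasDerivAt (fun x : ℝ => a / x ^ (m+1))
      ((0 * s^(m+1) - a * (((m:ℝ)+1) * s ^ m)) / (s^(m+1))^2) s :=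
    (hasDerivAt_const s a).div h1 hpow
  have hden : HasDerivAt (fun x : ℝ => x ^ (m+1) * Real.log x)
      ((((m:ℝ)+1) * s ^ m) * Real.log s + s^(m+1) * s⁻¹) s := h1.mul h2
  have hB : HasDerivAt (fun x : ℝ => b / (x ^ (m+1) * Real.log x))
      ((0 * (s^(m+1) * Real.log s)
          - b * ((((m:ℝ)+1)*s^m) * Real.log s + s^(m+1) * s⁻¹))
        / (s^(m+1) * Real.log s)^2) s :=
    (hasDerivAt_const s b).div hden (mul_ne_zero hpow hlog)
  refine (hA.add hB).congr_deriv ?_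
  push_cast
  field_simp
  ring

/-- The special quantized-rate solutions `b_k^e(s) = c_k/s^k + d_k/(s^k log s)` solve
the modulation ODE system up to errors of size `O(1/(s^{k+1} (log s)²))`. -/
theorem special_solutions_of_b_system (ℓ L : ℕ) (hℓ : 2 ≤ ℓ) (hL : ℓ ≤ L)
    (c d : ℕ → ℝ)
    (hc1 : c 1 = (ℓ : ℝ) / ((ℓ : ℝ) - 1))
    (hcrec : ∀ k : ℕ, 1 ≤ k → k ≤ ℓ - 1 →
      c (k + 1) = -(((ℓ : ℝ) - (k : ℝ)) / ((ℓ : ℝ) - 1)) * c k)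
    (hd1 : d 1 = -(ℓ : ℝ) / ((ℓ : ℝ) - 1) ^ 2)
    (hd2 : d 2 = -d 1 + (c 1) ^ 2 / 2)
    (hdrec : ∀ k : ℕ, 2 ≤ k → k ≤ ℓ - 1 →
      d (k + 1) = -(((ℓ : ℝ) - (k : ℝ)) / ((ℓ : ℝ) - 1)) * d k
        + ((ℓ : ℝ) * ((ℓ : ℝ) - (k : ℝ)) / ((ℓ : ℝ) - 1) ^ 2) * c k)
    (be : ℕ → ℝ → ℝ)
    (hbe : ∀ k : ℕ, 1 ≤ k → k ≤ ℓ → ∀ s : ℝ,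
      be k s = c k / s ^ k + d k / (s ^ k * Real.log s))
    (hbe0 : ∀ k : ℕ, ℓ < k → ∀ s : ℝ, be k s = 0) :
    ∀ k : ℕ, 1 ≤ k → k ≤ L →
      Asymptotics.IsBigO Filter.atTop
        (fun s : ℝ => deriv (be k) s
          + ((k : ℝ) - 1 + 1 / ((1 + if k = 1 then (1:ℝ) else 0) * Real.log s))
            * be 1 s * be k s
          - be (k + 1) s)
        (fun s : ℝ => 1 / (s ^ (k + 1) * (Real.log s) ^ 2)) := by
  intro k hk1 hkL
  by_cases hkℓ : ℓ < k
  · -- trivial case: all functions vanish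
    have hbk : be k = fun _ => (0:ℝ) := funext (hbe0 k hkℓ)
    have hbk1 : be (k+1) = fun _ => (0:ℝ) := funext (hbe0 (k+1) (by omega))
    have hzero : (fun s : ℝ => deriv (be k) s
          + ((k : ℝ) - 1 + 1 / ((1 + if k = 1 then (1:ℝ) else 0) * Real.log s))
            * be 1 s * be k s
          - be (k + 1) s) = fun _ => (0:ℝ) := by
      funext s
      simp [hbk, hbk1]
    rw [hzero]
    exact isBigO_zero _ _
  · push_neg at hkℓ
    have hℓR : (2:ℝ) ≤ (ℓ:ℝ) := by exact_mod_cast hℓ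
    have hℓ1 : (ℓ:ℝ) - 1 ≠ 0 := by linarith
    set E : ℝ := 1 + if k = 1 then (1:ℝ) else 0 with hE
    have hE0 : E ≠ 0 := by
      rw [hE]; split <;> norm_num
    set α : ℝ := E⁻¹ with hα
    set C1 : ℝ := ((k:ℝ) - 1) * c 1 * c k - (k:ℝ) * c k with hC1
    set D1 : ℝ := ((k:ℝ) - 1) * c 1 * d k + ((k:ℝ) - 1) * d 1 * c k
        + α * c 1 * c k - (k:ℝ) * d k with hD1
    have hbk1 : ∀ s : ℝ, be (k+1) s = C1 / s ^ (k+1) + D1 / (s ^ (k+1) * Real.log s) := by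
      intro s
      rcases eq_or_lt_of_le hkℓ with hkeq | hklt
      · have hkR : (k:ℝ) = (ℓ:ℝ) := by rw [hkeq]
        have hk2 : 2 ≤ k := by omega
        have hC10 : C1 = 0 := by
          rw [hC1, hc1, hkR]; field_simp; ring
        have hα1 : α = 1 := by
          rw [hα, hE]; split
          · omega
          · norm_num
        have hD10 : D1 = 0 := by
          rw [hD1, hα1, hc1, hd1, hkR]; field_simp; ring
        rw [hbe0 (k+1) (by omega), hC10, hD10]; simp
      · have hkle : k ≤ ℓ - 1 := by omega
        have hck1 : c (k+1) = C1 := by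
          rw [hcrec k hk1 hkle, hC1, hc1]
          field_simp
          ring
        have hdk1 : d (k+1) = D1 := by
          rcases eq_or_lt_of_le hk1 with hk1' | hk2
          · have hk1'' : k = 1 := hk1'.symm
            have hα2 : α = 1/2 := by
              rw [hα, hE]; rw [if_pos hk1'']; norm_num
            subst hk1''
            rw [hd2, hD1, hα2]
            push_cast
            ring
          · have hα1 : α = 1 := by
              rw [hα, hE]; split
              · omega
              · norm_num
            rw [hdrec k hk2 hkle, hD1, hα1, hc1, hd1]
            field_simp
            ring
        rw [hbe (k+1) (by omega) (by omega), hck1, hdk1]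
    have hfunk : be k = fun x : ℝ => c k / x ^ k + d k / (x ^ k * Real.log x) :=
      funext (hbe k hk1 hkℓ)
    have hfun1 : ∀ s : ℝ, be 1 s = c 1 / s ^ 1 + d 1 / (s ^ 1 * Real.log s) :=
      hbe 1 le_rfl (by omega)
    set A : ℝ := ((k:ℝ) - 1) * d 1 * d k + α * (c 1 * d k + d 1 * c k) - d k with hA
    set B : ℝ := α * d 1 * d k with hB
    have h1e : (1:ℝ) < Real.exp 1 := by
      have := Real.exp_one_gt_d9; linarith
    have key : ∀ s : ℝ, Real.exp 1 < s →
        deriv (be k) s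
          + ((k : ℝ) - 1 + 1 / ((1 + if k = 1 then (1:ℝ) else 0) * Real.log s))
            * be 1 s * be k s - be (k + 1) s
        = A / (s ^ (k+1) * (Real.log s)^2) + B / (s ^ (k+1) * (Real.log s)^3) := by
      intro s hs
      have hs1 : 1 < s := lt_trans h1e hs
      have hs0 : s ≠ 0 := by linarith
      have hlogpos : 0 < Real.log s := Real.log_pos hs1
      have hlogne : Real.log s ≠ 0 := hlogpos.ne'
      have hd : deriv (be k) s
          = -(k:ℝ) * c k / s ^ (k+1)
            - d k * ((k:ℝ) * Real.log s + 1) / (s ^ (k+1) * (Real.log s)^2) := by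
        rw [hfunk]
        exact (deriv_aux_special k hk1 (c k) (d k) s hs1).deriv
      rw [hd, hfun1 s, hbe k hk1 hkℓ s, hbk1 s, ← hE]
      rw [hA, hB, hC1, hD1, hα]
      field_simp
      ring
    have heq : (fun s : ℝ => deriv (be k) s
          + ((k : ℝ) - 1 + 1 / ((1 + if k = 1 then (1:ℝ) else 0) * Real.log s))
            * be 1 s * be k s
          - be (k + 1) s)
        =ᶠ[atTop] (fun s : ℝ =>
          A / (s ^ (k+1) * (Real.log s)^2) + B / (s ^ (k+1) * (Real.log s)^3)) := by
      filter_upwards [eventually_gt_atTop (Real.exp 1)] with s hs using key s hs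
    refine heq.trans_isBigO ?_
    rw [isBigO_iff]
    refine ⟨abs A + abs B, ?_⟩
    filter_upwards [eventually_gt_atTop (Real.exp 1)] with s hs
    have hs1 : 1 < s := lt_trans h1e hs
    have hs0 : (0:ℝ) < s := by linarith
    have hX : (0:ℝ) < s ^ (k+1) := pow_pos hs0 _
    have hy1 : 1 ≤ Real.log s := by
      have : Real.log (Real.exp 1) < Real.log s := Real.log_lt_log (Real.exp_pos 1) hs
      rw [Real.log_exp] at this; linarith
    have hy0 : 0 < Real.log s := by linarith
    have h2 : (0:ℝ) < s ^ (k+1) * (Real.log s)^2 := by positivity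
    have h3 : (0:ℝ) < s ^ (k+1) * (Real.log s)^3 := by positivity
    have hle : s ^ (k+1) * (Real.log s)^2 ≤ s ^ (k+1) * (Real.log s)^3 := by
      have : (Real.log s)^2 ≤ (Real.log s)^3 := by
        calc (Real.log s)^2 = 1 * (Real.log s)^2 := by ring
        _ ≤ Real.log s * (Real.log s)^2 := by
            apply mul_le_mul_of_nonneg_right hy1 (by positivity)
        _ = (Real.log s)^3 := by ring
      exact mul_le_mul_of_nonneg_left this (le_of_lt hX)
    have habs : abs (1 / (s ^ (k+1) * (Real.log s)^2)) = 1 / (s ^ (k+1) * (Real.log s)^2) :=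
      abs_of_pos (by positivity)
    rw [Real.norm_eq_abs, Real.norm_eq_abs, habs]
    calc abs (A / (s ^ (k+1) * (Real.log s)^2) + B / (s ^ (k+1) * (Real.log s)^3))
        ≤ abs (A / (s ^ (k+1) * (Real.log s)^2)) + abs (B / (s ^ (k+1) * (Real.log s)^3)) :=
          abs_add_le _ _
      _ = abs A / (s ^ (k+1) * (Real.log s)^2) + abs B / (s ^ (k+1) * (Real.log s)^3) := by
          rw [abs_div, abs_div, abs_of_pos h2, abs_of_pos h3]
      _ ≤ abs A / (s ^ (k+1) * (Real.log s)^2) + abs B / (s ^ (k+1) * (Real.log s)^2) := by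
          gcongr
      _ = (abs A + abs B) * (1 / (s ^ (k+1) * (Real.log s)^2)) := by ring
end

section
/- Let ℓ ≥ 2 be an integer and let c₁ = ℓ/(ℓ−1), c_{k+1} = −((ℓ−k)/(ℓ−1))·c_k for 1 ≤ k ≤ ℓ−1. Let A_ℓ be the ℓ×ℓ real matrix with entries: (A_ℓ)_{1,1} = 1; (A_ℓ)_{k,k} = (ℓ−k)/(ℓ−1) for 2 ≤ k ≤ ℓ (in particular (A_ℓ)_{ℓ,ℓ} = 0); (A_ℓ)_{k,k+1} = 1 for 1 ≤ k ≤ ℓ−1; (A_ℓ)_{k,1} = −(k−1)·c_k for 2 ≤ k ≤ ℓ; and all other entries zero. Then A_ℓ is diagonalizable over ℝ: there exists an invertible ℓ×ℓ real matrix P_ℓ with A_ℓ = P_ℓ⁻¹ D_ℓ P_ℓ, where D_ℓ is the diagonal matrix with diagonal entries (−1, 2/(ℓ−1), 3/(ℓ−1), …, (ℓ−1)/(ℓ−1), ℓ/(ℓ−1)). In particular A_ℓ has exactly one negative eigenvalue −1 and ℓ−1 positive eigenvalues k/(ℓ−1), 2 ≤ k ≤ ℓ. -/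
open Matrix Finset
open scoped Nat

private lemma key_alt (q : ℕ) (hq : 2 ≤ q) (B : ℤ) :
    ∑ s ∈ Finset.range (q + 1), (-1 : ℤ) ^ s * (B - s) * (q.choose s) = 0 := by
  have h1 : ∑ s ∈ Finset.range (q + 1), (-1 : ℤ) ^ s * (q.choose s) = 0 :=
    Int.alternating_sum_range_choose_of_ne (by omega)
  have h2 : ∑ s ∈ Finset.range (q + 1), (-1 : ℤ) ^ s * s * (q.choose s) = 0 := by
    rw [Finset.sum_range_succ']
    have hN : ∀ k : ℕ, q * (q - 1).choose k = q.choose (k + 1) * (k + 1) := by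
      intro k
      have h := Nat.add_one_mul_choose_eq (q - 1) k
      simpa [Nat.succ_eq_add_one, show q - 1 + 1 = q by omega] using h
    have hterm : ∀ k ∈ Finset.range q, (-1 : ℤ) ^ (k + 1) * (↑(k + 1)) * (q.choose (k + 1))
        = -(q : ℤ) * ((-1) ^ k * ((q - 1).choose k)) := by
      intro k _
      have hcast : (q : ℤ) * ((q - 1).choose k : ℤ) = (q.choose (k + 1) : ℤ) * ((k : ℤ) + 1) := by
        exact_mod_cast hN k
      push_cast
      linear_combination ((-1 : ℤ) ^ k) * hcast
    rw [Finset.sum_congr rfl hterm, ← Finset.mul_sum]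
    have halt := Int.alternating_sum_range_choose_of_ne (n := q - 1) (by omega : q - 1 ≠ 0)
    rw [show q - 1 + 1 = q from by omega] at halt
    rw [halt, mul_zero]
    simp
  calc ∑ s ∈ Finset.range (q + 1), (-1 : ℤ) ^ s * (B - s) * (q.choose s)
      = ∑ s ∈ Finset.range (q + 1),
          (B * ((-1) ^ s * (q.choose s)) - (-1) ^ s * s * (q.choose s)) :=
        Finset.sum_congr rfl (fun s _ => by ring)
    _ = B * (∑ s ∈ Finset.range (q + 1), (-1 : ℤ) ^ s * (q.choose s))
          - ∑ s ∈ Finset.range (q + 1), (-1 : ℤ) ^ s * s * (q.choose s) := by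
        rw [Finset.sum_sub_distrib, Finset.mul_sum]
    _ = 0 := by rw [h1, h2, mul_zero, sub_zero]

private lemma hockey (r : ℕ) : ∀ m : ℕ,
    ∑ j ∈ Finset.range (m + 1), (r + j).choose r = (r + m + 1).choose (r + 1)
  | 0 => by simp
  | m + 1 => by
      rw [Finset.sum_range_succ, hockey r m]
      have : r + (m + 1) + 1 = (r + m + 1) + 1 := by omega
      rw [this, Nat.choose_succ_succ (r + m + 1) r]
      simp only [Nat.succ_eq_add_one, show r + (m + 1) = r + m + 1 from by omega]
      omega

private lemma key2 (r : ℕ) : ∀ m : ℕ,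
    ∑ j ∈ Finset.range (m + 1), (m + 1 - j) * (r + j).choose r = (r + m + 2).choose (r + 2)
  | 0 => by simp
  | m + 1 => by
      have hsplit : ∀ j ∈ Finset.range (m + 2), (m + 2 - j) * (r + j).choose r
          = (m + 1 - j) * (r + j).choose r + (r + j).choose r := by
        intro j hj
        rw [Finset.mem_range] at hj
        have : m + 2 - j = (m + 1 - j) + 1 := by omega
        rw [this]; ring
      rw [Finset.sum_congr rfl hsplit, Finset.sum_add_distrib]
      rw [show m + 2 = (m+1) + 1 from rfl,
        Finset.sum_range_succ (fun j => (m + 1 - j) * (r + j).choose r) (m+1)]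
      rw [Nat.sub_self, zero_mul, add_zero, key2 r m, hockey r (m + 1)]
      have h1 : r + (m + 1) + 2 = (r + m + 2) + 1 := by omega
      have h2 : r + (m + 1) + 1 = r + m + 2 := by omega
      rw [h1, h2, Nat.choose_succ_succ (r + m + 2) (r + 1)]
      simp only [Nat.succ_eq_add_one, show r + 1 + 1 = r + 2 from by omega]
      omega

private lemma key3 (l : ℕ) (hl : 1 ≤ l) :
    ∑ k ∈ Finset.range (l + 1), k * ((l - 1) + (l - k)).choose (l - 1)
      = (2 * l).choose (l + 1) := by
  rw [← Finset.sum_range_reflect]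
  have hcong : ∀ j ∈ Finset.range (l + 1),
      (l + 1 - 1 - j) * ((l - 1) + (l - (l + 1 - 1 - j))).choose (l - 1)
      = (l - j) * ((l - 1) + j).choose (l - 1) := by
    intro j hj
    rw [Finset.mem_range] at hj
    have e1 : l + 1 - 1 - j = l - j := by omega
    have e2 : l - (l - j) = j := by omega
    rw [e1, e2]
  rw [Finset.sum_congr rfl hcong]
  rw [show l + 1 = (l - 1 + 1) + 1 from by omega]
  rw [Finset.sum_range_succ]
  have e3 : l - (l - 1 + 1) = 0 := by omega
  rw [e3, zero_mul, add_zero]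
  have hcong2 : ∀ j ∈ Finset.range (l - 1 + 1), (l - j) * ((l - 1) + j).choose (l - 1)
      = ((l - 1) + 1 - j) * ((l - 1) + j).choose (l - 1) := by
    intro j hj; rw [Finset.mem_range] at hj
    congr 1; omega
  rw [Finset.sum_congr rfl hcong2, key2 (l - 1) (l - 1)]
  congr 1 <;> omega

private lemma prod_cast_desc (x t : ℕ) (h : t ≤ x) :
    ∏ u ∈ Finset.range t, ((x : ℝ) - u) = (x.descFactorial t : ℝ) := by
  rw [Nat.descFactorial_eq_prod_range, Nat.cast_prod]
  refine Finset.prod_congr rfl fun u hu => ?_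
  rw [Finset.mem_range] at hu
  rw [Nat.cast_sub (by omega)]

private lemma prod_cast_zero (x t : ℕ) (h : x < t) :
    ∏ u ∈ Finset.range t, ((x : ℝ) - u) = 0 :=
  Finset.prod_eq_zero (Finset.mem_range.mpr h) (by simp)

private lemma prod_cast_asc (l t : ℕ) :
    ∏ u ∈ Finset.range t, (-(l : ℝ) - u) = (-1) ^ t * (l.ascFactorial t : ℝ) := by
  induction t with
  | zero => simp
  | succ t ih =>
      rw [Finset.prod_range_succ, ih, Nat.ascFactorial_succ]
      push_cast
      ring

private lemma dd1 {l q s : ℕ} (h1 : s ≤ q) (h2 : s ≤ l) :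
    l.descFactorial (l - s) * q.descFactorial s = l ! * q.choose s := by
  have hpos : 0 < s ! * (q - s)! := Nat.mul_pos s.factorial_pos (q - s).factorial_pos
  apply Nat.eq_of_mul_eq_mul_right hpos
  have e1 : s ! * l.descFactorial (l - s) = l ! := by
    have := Nat.factorial_mul_descFactorial (Nat.sub_le l s)
    rwa [Nat.sub_sub_self h2] at this
  have e2 : (q - s)! * q.descFactorial s = q ! := Nat.factorial_mul_descFactorial h1
  have e3 : q.choose s * s ! * (q - s)! = q ! := Nat.choose_mul_factorial_mul_factorial h1
  calc l.descFactorial (l - s) * q.descFactorial s * (s ! * (q - s)!)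
      = (s ! * l.descFactorial (l - s)) * ((q - s)! * q.descFactorial s) := by ring
    _ = l ! * q ! := by rw [e1, e2]
    _ = l ! * (q.choose s * s ! * (q - s)!) := by rw [e3]
    _ = l ! * q.choose s * (s ! * (q - s)!) := by ring

private lemma dd2 {l k : ℕ} (hl : 1 ≤ l) (hk : k ≤ l) :
    l.descFactorial k * l.ascFactorial (l - k) = l ! * ((l - 1) + (l - k)).choose (l - 1) := by
  have hpos : 0 < (l - k)! * (l - 1)! := Nat.mul_pos (l - k).factorial_pos (l - 1).factorial_pos
  apply Nat.eq_of_mul_eq_mul_right hpos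
  have e1 : (l - k)! * l.descFactorial k = l ! := Nat.factorial_mul_descFactorial hk
  have e2 : (l - 1)! * l.ascFactorial (l - k) = ((l - 1) + (l - k))! := by
    have := Nat.factorial_mul_ascFactorial (l - 1) (l - k)
    rwa [show l - 1 + 1 = l from by omega] at this
  have e3 : ((l - 1) + (l - k)).choose (l - 1) * (l - 1)! * (l - k)! = ((l - 1) + (l - k))! := by
    have := Nat.choose_mul_factorial_mul_factorial
      (show l - 1 ≤ (l - 1) + (l - k) from Nat.le_add_right _ _)
    rwa [Nat.add_sub_cancel_left] at this
  calc l.descFactorial k * l.ascFactorial (l - k) * ((l - k)! * (l - 1)!)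
      = ((l - k)! * l.descFactorial k) * ((l - 1)! * l.ascFactorial (l - k)) := by ring
    _ = l ! * ((l - 1) + (l - k))! := by rw [e1, e2]
    _ = l ! * (((l - 1) + (l - k)).choose (l - 1) * (l - 1)! * (l - k)!) := by rw [e3]
    _ = l ! * ((l - 1) + (l - k)).choose (l - 1) * ((l - k)! * (l - 1)!) := by ring

private lemma dd3 {l : ℕ} (hl : 1 ≤ l) :
    l.ascFactorial (l + 1) = (l + 1)! * (2 * l).choose (l + 1) := by
  have hpos : 0 < (l - 1)! := (l - 1).factorial_pos
  apply Nat.eq_of_mul_eq_mul_left hpos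
  have e2 : (l - 1)! * l.ascFactorial (l + 1) = ((l - 1) + (l + 1))! := by
    have := Nat.factorial_mul_ascFactorial (l - 1) (l + 1)
    rwa [show l - 1 + 1 = l from by omega] at this
  have e3 : (2 * l).choose (l + 1) * (l + 1)! * (l - 1)! = (2 * l)! := by
    have := Nat.choose_mul_factorial_mul_factorial (show l + 1 ≤ 2 * l from by omega)
    rwa [show 2 * l - (l + 1) = l - 1 from by omega] at this
  calc (l - 1)! * l.ascFactorial (l + 1) = ((l - 1) + (l + 1))! := e2
    _ = (2 * l)! := by rw [show (l - 1) + (l + 1) = 2 * l from by omega]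
    _ = (2 * l).choose (l + 1) * (l + 1)! * (l - 1)! := e3.symm
    _ = (l - 1)! * ((l + 1)! * (2 * l).choose (l + 1)) := by ring

private lemma scaled_key (ℓ : ℕ) (hℓ : 2 ≤ ℓ) (X : ℝ)
    (hX : X = -(((ℓ - 1 : ℕ) : ℕ) : ℝ) ∨ ∃ q : ℕ, 2 ≤ q ∧ q ≤ ℓ ∧ X = (q : ℝ)) :
    ∑ k ∈ Finset.Ico 1 ℓ, (-1 : ℝ) ^ k * (k : ℝ) * (ℓ : ℝ) * (((ℓ - 1).descFactorial k : ℕ) : ℝ)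
        * (∏ u ∈ Finset.range (ℓ - 1 - k), (X - (u : ℝ)))
      = -∏ u ∈ Finset.range ℓ, (X - (u : ℝ)) := by
  set f : ℕ → ℝ := fun k => (-1 : ℝ) ^ k * (k : ℝ) * (ℓ : ℝ) * (((ℓ - 1).descFactorial k : ℕ) : ℝ)
        * (∏ u ∈ Finset.range (ℓ - 1 - k), (X - (u : ℝ))) with hf
  have hext : ∑ k ∈ Finset.Ico 1 ℓ, f k = ∑ k ∈ Finset.range ℓ, f k := by
    rw [Finset.range_eq_Ico, Finset.sum_eq_sum_Ico_succ_bot (by omega : 0 < ℓ) f]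
    simp [hf]
  have hsq : ∀ s : ℕ, (-1 : ℝ) ^ s * (-1 : ℝ) ^ s = 1 := by
    intro s; rw [← pow_add, ← two_mul, pow_mul]; norm_num
  have hfact : (ℓ : ℝ) * (((ℓ - 1)! : ℕ) : ℝ) = ((ℓ ! : ℕ) : ℝ) := by
    exact_mod_cast congrArg (Nat.cast : ℕ → ℝ) (Nat.mul_factorial_pred (by omega))
  have hneg : (-1 : ℝ) ^ ℓ = -(-1 : ℝ) ^ (ℓ - 1) := by
    have h := pow_succ (-1 : ℝ) (ℓ - 1)
    rw [show ℓ - 1 + 1 = ℓ from by omega] at h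
    rw [h]; ring
  rw [hext]
  rcases hX with hX | ⟨q, hq2, hqℓ, hX⟩
  · -- Case X = -(ℓ-1) : eigenvalue -1
    subst hX
    have hterm : ∀ k ∈ Finset.range ℓ, f k
        = (-1 : ℝ) ^ (ℓ - 1) * (ℓ : ℝ) * (((ℓ - 1)! : ℕ) : ℝ)
          * (((k * ((ℓ - 1 - 1) + ((ℓ - 1) - k)).choose (ℓ - 1 - 1) : ℕ)) : ℝ) := by
      intro k hk
      rw [Finset.mem_range] at hk
      have hdd := congrArg (Nat.cast : ℕ → ℝ)
        (dd2 (l := ℓ - 1) (k := k) (by omega) (by omega))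
      push_cast at hdd
      rw [hf]
      simp only []
      rw [prod_cast_asc (ℓ - 1) (ℓ - 1 - k)]
      calc (-1 : ℝ) ^ k * (k : ℝ) * (ℓ : ℝ) * (((ℓ - 1).descFactorial k : ℕ) : ℝ)
            * ((-1) ^ (ℓ - 1 - k) * (((ℓ - 1).ascFactorial (ℓ - 1 - k) : ℕ) : ℝ))
          = ((-1 : ℝ) ^ k * (-1) ^ (ℓ - 1 - k)) * ((k : ℝ) * (ℓ : ℝ)
              * ((((ℓ - 1).descFactorial k : ℕ) : ℝ)
                * (((ℓ - 1).ascFactorial (ℓ - 1 - k) : ℕ) : ℝ))) := by ring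
        _ = (-1 : ℝ) ^ (ℓ - 1) * ((k : ℝ) * (ℓ : ℝ)
              * ((((ℓ - 1).descFactorial k : ℕ) : ℝ)
                * (((ℓ - 1).ascFactorial (ℓ - 1 - k) : ℕ) : ℝ))) := by
            rw [← pow_add, show k + (ℓ - 1 - k) = ℓ - 1 from by omega]
        _ = (-1 : ℝ) ^ (ℓ - 1) * (ℓ : ℝ) * (((ℓ - 1)! : ℕ) : ℝ)
            * (((k * ((ℓ - 1 - 1) + ((ℓ - 1) - k)).choose (ℓ - 1 - 1) : ℕ)) : ℝ) := by
            push_cast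
            linear_combination ((-1 : ℝ) ^ (ℓ - 1) * (k : ℝ) * (ℓ : ℝ)) * hdd
    rw [Finset.sum_congr rfl hterm, ← Finset.mul_sum, ← Nat.cast_sum]
    have hk3 := key3 (ℓ - 1) (by omega)
    rw [show ℓ - 1 + 1 = ℓ from by omega] at hk3
    rw [hk3]
    rw [prod_cast_asc (ℓ - 1) ℓ]
    have hdd3 := congrArg (Nat.cast : ℕ → ℝ) (dd3 (l := ℓ - 1) (by omega))
    rw [show ℓ - 1 + 1 = ℓ from by omega] at hdd3
    push_cast at hdd3 ⊢
    rw [hdd3, hneg]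
    push_cast at hfact
    linear_combination (((2 * (ℓ - 1)).choose ℓ : ℕ) : ℝ) * (-1 : ℝ) ^ (ℓ - 1) * hfact
  · -- Case X = q, 2 ≤ q ≤ ℓ
    subst hX
    have hrefl : ∑ k ∈ Finset.range ℓ, f k = ∑ s ∈ Finset.range ℓ, f (ℓ - 1 - s) :=
      (Finset.sum_range_reflect f ℓ).symm
    rw [hrefl]
    have hterm : ∀ s ∈ Finset.range ℓ, f (ℓ - 1 - s)
        = ((-1 : ℝ) ^ (ℓ - 1) * (ℓ : ℝ) * (((ℓ - 1)! : ℕ) : ℝ))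
          * ((((-1 : ℤ) ^ s * ((ℓ : ℤ) - 1 - (s : ℤ)) * (q.choose s : ℤ)) : ℤ) : ℝ) := by
      intro s hs
      rw [Finset.mem_range] at hs
      rw [hf]
      simp only []
      rw [show ℓ - 1 - (ℓ - 1 - s) = s from by omega]
      by_cases hsq' : s ≤ q
      · rw [prod_cast_desc q s hsq']
        have hdd := congrArg (Nat.cast : ℕ → ℝ)
          (dd1 (l := ℓ - 1) (q := q) (s := s) hsq' (by omega))
        push_cast at hdd
        have ec : ((ℓ - 1 - s : ℕ) : ℝ) = (ℓ : ℝ) - 1 - (s : ℝ) := by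
          rw [Nat.cast_sub (by omega : s ≤ ℓ - 1), Nat.cast_sub (by omega : 1 ≤ ℓ)]
          norm_num
        have hsign : (-1 : ℝ) ^ (ℓ - 1 - s) = (-1) ^ (ℓ - 1) * (-1) ^ s := by
          have h1 : (-1 : ℝ) ^ (ℓ - 1 - s) * (-1) ^ s = (-1) ^ (ℓ - 1) := by
            rw [← pow_add, show ℓ - 1 - s + s = ℓ - 1 from by omega]
          calc (-1 : ℝ) ^ (ℓ - 1 - s) = (-1) ^ (ℓ - 1 - s) * ((-1) ^ s * (-1) ^ s) := by
                rw [hsq s, mul_one]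
            _ = ((-1) ^ (ℓ - 1 - s) * (-1) ^ s) * (-1) ^ s := by ring
            _ = (-1) ^ (ℓ - 1) * (-1) ^ s := by rw [h1]
        rw [hsign, ec]
        push_cast
        linear_combination ((-1 : ℝ) ^ (ℓ - 1) * (-1 : ℝ) ^ s
          * ((ℓ : ℝ) - 1 - (s : ℝ)) * (ℓ : ℝ)) * hdd
      · have hzero : ∏ u ∈ Finset.range s, ((q : ℝ) - (u : ℝ)) = 0 :=
          prod_cast_zero q s (by omega)
        rw [hzero, Nat.choose_eq_zero_of_lt (by omega)]
        simp
    rw [Finset.sum_congr rfl hterm, ← Finset.mul_sum, ← Int.cast_sum]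
    by_cases hql : q < ℓ
    · have htrunc : ∑ s ∈ Finset.range ℓ, (-1 : ℤ) ^ s * ((ℓ : ℤ) - 1 - (s : ℤ)) * (q.choose s : ℤ)
          = ∑ s ∈ Finset.range (q + 1), (-1 : ℤ) ^ s * ((ℓ : ℤ) - 1 - (s : ℤ)) * (q.choose s : ℤ) := by
        refine (Finset.sum_subset (Finset.range_subset_range.mpr (by omega)) ?_).symm
        intro s _ hs
        rw [Finset.mem_range, not_lt] at hs
        rw [Nat.choose_eq_zero_of_lt (by omega)]
        simp
      rw [htrunc, key_alt q hq2 ((ℓ : ℤ) - 1)]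
      rw [prod_cast_zero q ℓ (by omega)]
      simp
    · have hqeq : q = ℓ := by omega
      subst hqeq
      have hka := key_alt q hq2 ((q : ℤ) - 1)
      rw [Finset.sum_range_succ, Nat.choose_self] at hka
      have hsum : ∑ s ∈ Finset.range q, (-1 : ℤ) ^ s * ((q : ℤ) - 1 - (s : ℤ)) * (q.choose s : ℤ)
          = (-1 : ℤ) ^ q := by push_cast at hka ⊢; linear_combination hka
      rw [hsum]
      rw [prod_cast_desc q q le_rfl, Nat.descFactorial_self]
      have hprod : (-1 : ℝ) ^ (q - 1) * (-1) ^ q = -1 := by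
        rw [hneg, mul_neg, hsq (q - 1)]
      push_cast
      push_cast at hfact
      linear_combination ((q : ℝ) * (((q - 1)! : ℕ) : ℝ)) * hprod - hfact

/-- The linearization matrix `A_ℓ` of the modulation ODE system around the special
solution is diagonalizable over `ℝ`, with diagonal `(-1, 2/(ℓ-1), …, ℓ/(ℓ-1))`. -/
theorem modulation_matrix_diagonalizable (ℓ : ℕ) (hℓ : 2 ≤ ℓ)
    (c : ℕ → ℝ)
    (hc1 : c 1 = (ℓ : ℝ) / ((ℓ : ℝ) - 1))
    (hcrec : ∀ k : ℕ, 1 ≤ k → k ≤ ℓ - 1 →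
      c (k + 1) = -(((ℓ : ℝ) - (k : ℝ)) / ((ℓ : ℝ) - 1)) * c k)
    (A : Matrix (Fin ℓ) (Fin ℓ) ℝ)
    (hA : ∀ i j : Fin ℓ,
      A i j =
        if (i : ℕ) = 0 ∧ (j : ℕ) = 0 then 1
        else if (j : ℕ) = (i : ℕ) + 1 then 1
        else if i = j then ((ℓ : ℝ) - ((i : ℕ) + 1)) / ((ℓ : ℝ) - 1)
        else if (j : ℕ) = 0 then -((i : ℕ) : ℝ) * c ((i : ℕ) + 1)
        else 0) :
    ∃ P : Matrix (Fin ℓ) (Fin ℓ) ℝ, IsUnit P.det ∧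
      A = P⁻¹ * Matrix.diagonal (fun i : Fin ℓ =>
        if (i : ℕ) = 0 then (-1 : ℝ) else (((i : ℕ) : ℝ) + 1) / ((ℓ : ℝ) - 1)) * P := by
  have hl2 : (2 : ℝ) ≤ (ℓ : ℝ) := by exact_mod_cast hℓ
  have hLpos : (0 : ℝ) < (ℓ : ℝ) - 1 := by linarith
  have hL : ((ℓ : ℝ) - 1) ≠ 0 := ne_of_gt hLpos
  have hcL : (((ℓ - 1 : ℕ) : ℕ) : ℝ) = (ℓ : ℝ) - 1 := by
    rw [Nat.cast_sub (by omega : 1 ≤ ℓ)]; norm_num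
  set x : Fin ℓ → ℝ := fun p => if (p : ℕ) = 0 then -(((ℓ - 1 : ℕ) : ℕ) : ℝ)
    else ((p : ℕ) : ℝ) + 1 with hxdef
  set ev : Fin ℓ → ℝ := fun i => if (i : ℕ) = 0 then (-1 : ℝ)
    else (((i : ℕ) : ℝ) + 1) / ((ℓ : ℝ) - 1) with hevdef
  have hev : ∀ p : Fin ℓ, ev p = x p / ((ℓ : ℝ) - 1) := by
    intro p
    by_cases h : (p : ℕ) = 0
    · simp only [hevdef, hxdef, if_pos h, hcL]
      field_simp
    · simp only [hevdef, hxdef, if_neg h]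
  set W : Fin ℓ → ℕ → ℝ := fun p j =>
    ∏ m ∈ Finset.Ico (j + 1) ℓ, ((x p - ((ℓ : ℝ) - 1 - (m : ℝ))) / ((ℓ : ℝ) - 1)) with hWdef
  set P : Matrix (Fin ℓ) (Fin ℓ) ℝ :=
    Matrix.of (fun p j : Fin ℓ => W p (j : ℕ)) with hPdef
  have hWstep : ∀ (p : Fin ℓ) (j : ℕ), j + 1 < ℓ →
      W p j = ((x p - ((ℓ : ℝ) - 1 - ((j + 1 : ℕ) : ℝ))) / ((ℓ : ℝ) - 1)) * W p (j + 1) := by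
    intro p j hj
    rw [hWdef]
    simp only []
    rw [Finset.prod_eq_prod_Ico_succ_bot hj]
  have hWlast : ∀ p : Fin ℓ, W p (ℓ - 1) = 1 := by
    intro p
    rw [hWdef]
    simp only []
    rw [show ℓ - 1 + 1 = ℓ from by omega, Finset.Ico_self, Finset.prod_empty]
  have hWG : ∀ (p : Fin ℓ) (j : ℕ), j < ℓ →
      W p j = (∏ u ∈ Finset.range (ℓ - 1 - j), (x p - (u : ℝ)))
        / ((ℓ : ℝ) - 1) ^ (ℓ - 1 - j) := by
    intro p j hj
    rw [hWdef]
    simp only []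
    rw [Finset.prod_div_distrib, Finset.prod_const, Nat.card_Ico]
    have hnum : ∏ m ∈ Finset.Ico (j + 1) ℓ, (x p - ((ℓ : ℝ) - 1 - (m : ℝ)))
        = ∏ u ∈ Finset.range (ℓ - 1 - j), (x p - (u : ℝ)) := by
      have hc : ∀ m ∈ Finset.Ico (j + 1) ℓ,
          x p - ((ℓ : ℝ) - 1 - (m : ℝ)) = x p - (((ℓ - 1 - m : ℕ) : ℕ) : ℝ) := by
        intro m hm
        rw [Finset.mem_Ico] at hm
        rw [Nat.cast_sub (by omega : m ≤ ℓ - 1), hcL]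
      rw [Finset.prod_congr rfl hc]
      have := Finset.prod_Ico_reflect (fun u => x p - ((u : ℕ) : ℝ)) (j + 1)
        (show ℓ ≤ (ℓ - 1) + 1 from by omega)
      rw [show (ℓ - 1) + 1 - ℓ = 0 from by omega,
        show (ℓ - 1) + 1 - (j + 1) = ℓ - 1 - j from by omega] at this
      rw [this, ← Finset.range_eq_Ico]
    rw [hnum, show ℓ - (j + 1) = ℓ - 1 - j from by omega]
  have hcf : ∀ k : ℕ, 1 ≤ k → k ≤ ℓ - 1 →
      c (k + 1) = (-1 : ℝ) ^ k * (ℓ : ℝ) * (((ℓ - 1).descFactorial k : ℕ) : ℝ)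
        / ((ℓ : ℝ) - 1) ^ (k + 1) := by
    intro k hk1
    induction k, hk1 using Nat.le_induction with
    | base =>
        intro _
        rw [hcrec 1 le_rfl (by omega), hc1, Nat.descFactorial_one, hcL]
        push_cast
        field_simp
    | succ k hk ih =>
        intro hk1
        rw [hcrec (k + 1) (by omega) hk1, ih (by omega), Nat.descFactorial_succ]
        have hc2 : (((ℓ - 1 - k : ℕ) : ℕ) : ℝ) = (ℓ : ℝ) - 1 - (k : ℝ) := by
          rw [Nat.cast_sub (by omega : k ≤ ℓ - 1), hcL]
        push_cast
        rw [hc2, pow_succ ((ℓ : ℝ) - 1) (k + 1), pow_succ (-1 : ℝ) k]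
        field_simp
        ring
  have hkeyW : ∀ p : Fin ℓ,
      ∑ k ∈ Finset.Ico 1 ℓ, (k : ℝ) * c (k + 1) * W p k = (1 - ev p) * W p 0 := by
    intro p
    have hXcase : x p = -(((ℓ - 1 : ℕ) : ℕ) : ℝ) ∨ ∃ q : ℕ, 2 ≤ q ∧ q ≤ ℓ ∧ x p = (q : ℝ) := by
      by_cases h : (p : ℕ) = 0
      · left; simp only [hxdef, if_pos h]
      · right
        exact ⟨(p : ℕ) + 1, by omega, by have := p.isLt; omega,
          by simp only [hxdef, if_neg h]; push_cast; ring⟩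
    have hsk := scaled_key ℓ hℓ (x p) hXcase
    have hpow : ∀ k : ℕ, 1 ≤ k → k < ℓ →
        ((ℓ : ℝ) - 1) ^ (k + 1) * ((ℓ : ℝ) - 1) ^ (ℓ - 1 - k) = ((ℓ : ℝ) - 1) ^ ℓ := by
      intro k h1 h2
      rw [← pow_add]
      congr 1
      omega
    have hterm : ∀ k ∈ Finset.Ico 1 ℓ, (k : ℝ) * c (k + 1) * W p k
        = ((-1 : ℝ) ^ k * (k : ℝ) * (ℓ : ℝ) * (((ℓ - 1).descFactorial k : ℕ) : ℝ)
            * (∏ u ∈ Finset.range (ℓ - 1 - k), (x p - (u : ℝ)))) / ((ℓ : ℝ) - 1) ^ ℓ := by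
      intro k hk
      rw [Finset.mem_Ico] at hk
      rw [hcf k hk.1 (by omega), hWG p k hk.2, ← hpow k hk.1 hk.2]
      simp only [div_eq_mul_inv, mul_inv]
      ring
    rw [Finset.sum_congr rfl hterm, ← Finset.sum_div, hsk]
    rw [hev p, hWG p 0 (by omega)]
    have hGl : ∏ u ∈ Finset.range ℓ, (x p - (u : ℝ))
        = (∏ u ∈ Finset.range (ℓ - 1), (x p - (u : ℝ))) * (x p - (((ℓ - 1 : ℕ) : ℕ) : ℝ)) := by
      have := Finset.prod_range_succ (fun u => x p - ((u : ℕ) : ℝ)) (ℓ - 1)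
      rw [show ℓ - 1 + 1 = ℓ from by omega] at this
      exact this
    rw [hGl, hcL]
    have hpl : ((ℓ : ℝ) - 1) ^ ℓ = ((ℓ : ℝ) - 1) ^ (ℓ - 1) * ((ℓ : ℝ) - 1) := by
      rw [← pow_succ]
      congr 1
      omega
    rw [hpl, show ℓ - 1 - 0 = ℓ - 1 from by omega]
    field_simp
    ring
  have hPA : P * A = Matrix.diagonal ev * P := by
    apply Matrix.ext
    intro p j
    rw [Matrix.mul_apply, Matrix.diagonal_mul]
    simp only [hPdef, Matrix.of_apply]
    by_cases hj : (j : ℕ) = 0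
    · have hterm : ∀ k : Fin ℓ, W p (k : ℕ) * A k j
          = W p (k : ℕ) * (if (k : ℕ) = 0 then 1 else -((k : ℕ) : ℝ) * c ((k : ℕ) + 1)) := by
        intro k
        rw [hA]
        by_cases hk : (k : ℕ) = 0
        · rw [if_pos ⟨hk, hj⟩, if_pos hk]
        · rw [if_neg (by tauto), if_neg (by omega : ¬ (j : ℕ) = (k : ℕ) + 1),
            if_neg (fun h : k = j => hk (by rw [Fin.ext_iff] at h; omega)),
            if_pos hj, if_neg hk]
      rw [Finset.sum_congr rfl (fun k _ => hterm k)]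
      rw [Fin.sum_univ_eq_sum_range
        (fun k : ℕ => W p k * (if k = 0 then 1 else -((k : ℕ) : ℝ) * c (k + 1))) ℓ]
      rw [Finset.range_eq_Ico, Finset.sum_eq_sum_Ico_succ_bot (by omega : 0 < ℓ)]
      have hrest : ∀ k ∈ Finset.Ico 1 ℓ,
          W p k * (if k = 0 then 1 else -((k : ℕ) : ℝ) * c (k + 1))
          = -((k : ℝ) * c (k + 1) * W p k) := by
        intro k hk
        rw [Finset.mem_Ico] at hk
        rw [if_neg (by omega)]
        ring
      rw [Finset.sum_congr rfl hrest, Finset.sum_neg_distrib, hkeyW p]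
      rw [if_pos rfl, hj]
      ring
    · have hjlt := j.isLt
      set j' : Fin ℓ := ⟨(j : ℕ) - 1, by omega⟩ with hj'def
      have hj'v : (j' : ℕ) = (j : ℕ) - 1 := rfl
      have hterm : ∀ k : Fin ℓ, W p (k : ℕ) * A k j
          = (if k = j' then W p ((j : ℕ) - 1) else 0)
            + (if k = j then W p (j : ℕ) * (((ℓ : ℝ) - ((j : ℕ) + 1)) / ((ℓ : ℝ) - 1)) else 0) := by
        intro k
        rw [hA]
        by_cases hk1 : k = j'
        · have hkv : (k : ℕ) = (j : ℕ) - 1 := by rw [hk1]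
          rw [if_neg (by omega : ¬((k : ℕ) = 0 ∧ (j : ℕ) = 0)),
            if_pos (by omega : (j : ℕ) = (k : ℕ) + 1), if_pos hk1,
            if_neg (fun h : k = j => by rw [Fin.ext_iff] at h; omega)]
          rw [hkv]
          ring
        · by_cases hk2 : k = j
          · have hkv : (k : ℕ) = (j : ℕ) := by rw [hk2]
            rw [if_neg (by omega : ¬((k : ℕ) = 0 ∧ (j : ℕ) = 0)),
              if_neg (by omega : ¬ (j : ℕ) = (k : ℕ) + 1), if_pos hk2,
              if_neg hk1, if_pos hk2, hkv]
            ring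
          · have hkv : ¬ (j : ℕ) = (k : ℕ) + 1 := by
              intro h
              exact hk1 (by rw [Fin.ext_iff, hj'v]; omega)
            rw [if_neg (by omega : ¬((k : ℕ) = 0 ∧ (j : ℕ) = 0)), if_neg hkv,
              if_neg hk2, if_neg hj, if_neg hk1, if_neg hk2]
            ring
      rw [Finset.sum_congr rfl (fun k _ => hterm k), Finset.sum_add_distrib,
        Finset.sum_ite_eq' Finset.univ j' (fun _ => W p ((j : ℕ) - 1)),
        Finset.sum_ite_eq' Finset.univ j
          (fun _ => W p (j : ℕ) * (((ℓ : ℝ) - ((j : ℕ) + 1)) / ((ℓ : ℝ) - 1)))]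
      rw [if_pos (Finset.mem_univ j'), if_pos (Finset.mem_univ j)]
      have hst := hWstep p ((j : ℕ) - 1) (by omega)
      rw [show (j : ℕ) - 1 + 1 = (j : ℕ) from by omega] at hst
      rw [hst, hev p]
      field_simp
      ring
  -- linear independence of the rows of P
  have hinj : Function.Injective ev := by
    intro a b hab
    rw [hevdef] at hab
    simp only [] at hab
    by_cases ha : (a : ℕ) = 0 <;> by_cases hb : (b : ℕ) = 0
    · exact Fin.ext (by omega)
    · rw [if_pos ha, if_neg hb] at hab
      have hpos : (0 : ℝ) < (((b : ℕ) : ℝ) + 1) / ((ℓ : ℝ) - 1) := by positivity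
      rw [← hab] at hpos
      linarith
    · rw [if_neg ha, if_pos hb] at hab
      have hpos : (0 : ℝ) < (((a : ℕ) : ℝ) + 1) / ((ℓ : ℝ) - 1) := by positivity
      rw [hab] at hpos
      linarith
    · rw [if_neg ha, if_neg hb] at hab
      have h2 := congrArg (fun t : ℝ => t * ((ℓ : ℝ) - 1)) hab
      simp only [div_mul_cancel₀ _ hL] at h2
      have h3 : ((a : ℕ) : ℝ) = ((b : ℕ) : ℝ) := by linarith
      exact Fin.ext (by exact_mod_cast h3)
  have hnz : ∀ p : Fin ℓ, (fun j => P p j) ≠ 0 := by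
    intro p hz
    have h1 : P p ⟨ℓ - 1, by omega⟩ = 0 := congrFun hz ⟨ℓ - 1, by omega⟩
    rw [hPdef] at h1
    simp only [Matrix.of_apply] at h1
    rw [hWlast p] at h1
    exact one_ne_zero h1
  have heig : ∀ p : Fin ℓ, (Matrix.mulVecLin Aᵀ) (fun j => P p j)
      = ev p • (fun j => P p j) := by
    intro p
    funext j
    have h := congrFun (congrFun hPA p) j
    rw [Matrix.mul_apply, Matrix.diagonal_mul] at h
    simp only [Matrix.mulVecLin_apply, Matrix.mulVec, dotProduct,
      Matrix.transpose_apply, Pi.smul_apply, smul_eq_mul]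
    rw [← h]
    exact Finset.sum_congr rfl (fun k _ => mul_comm _ _)
  have hLI : LinearIndependent ℝ (fun p : Fin ℓ => (fun j => P p j)) :=
    Module.End.eigenvectors_linearIndependent' (Matrix.mulVecLin Aᵀ) ev hinj _
      (fun p => ⟨Module.End.mem_eigenspace_iff.mpr (heig p), hnz p⟩)
  have hPu : IsUnit P := Matrix.linearIndependent_rows_iff_isUnit.mp hLI
  have hPdet : IsUnit P.det := (Matrix.isUnit_iff_isUnit_det P).mp hPu
  refine ⟨P, hPdet, ?_⟩
  have hPinv : P⁻¹ * P = 1 := Matrix.nonsing_inv_mul P hPdet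
  calc A = 1 * A := (one_mul A).symm
    _ = P⁻¹ * P * A := by rw [hPinv]
    _ = P⁻¹ * (P * A) := by rw [Matrix.mul_assoc]
    _ = P⁻¹ * (Matrix.diagonal ev * P) := by rw [hPA]
    _ = P⁻¹ * Matrix.diagonal ev * P := by rw [Matrix.mul_assoc]
end

section
/- Let ℓ ≥ 2 be an integer, set c₁ = ℓ/(ℓ−1) and d₁ = −ℓ/(ℓ−1)². Let λ : [s₀,∞) → (0,∞) be continuous with λ(s) = c·s^{−c₁}(log s)^{−d₁}·(1+o(1)) as s → ∞ for some constant c > 0. Define t(s) = ∫_{s₀}^{s} λ(σ) dσ and T = ∫_{s₀}^{∞} λ(σ) dσ. Then T < ∞, and there exists c' > 0 such that, as s → ∞, λ(s) = c'·(1+o(1))·(T − t(s))^{ℓ} / |log(T − t(s))|^{ℓ/(ℓ−1)}. (Intermediate step: (T − t(s))^{ℓ−1} = c''·s^{−1}(log s)^{ℓ/(ℓ−1)}·(1+o(1)) for some c'' > 0.) -/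
open Real Filter MeasureTheory Topology


lemma aux_rpow_log_zero {r : ℝ} (hr : r < 0) (u : ℝ) :
    Tendsto (fun s : ℝ => s ^ r * Real.log s ^ u) atTop (𝓝 0) := by
  have h := (isLittleO_log_rpow_rpow_atTop u (neg_pos.2 hr)).tendsto_div_nhds_zero
  refine h.congr' ?_
  filter_upwards [eventually_gt_atTop (0:ℝ)] with s hs
  rw [div_eq_mul_inv, ← Real.rpow_neg hs.le, neg_neg, mul_comm]

lemma aux_main (ℓ : ℕ) (hℓ : 2 ≤ ℓ) (lam F : ℝ → ℝ)
    (hposev : ∀ᶠ s in atTop, 0 < lam s)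
    (c : ℝ) (hc : 0 < c)
    (hA : Tendsto (fun s : ℝ => lam s * s ^ ((ℓ:ℝ)/((ℓ:ℝ)-1))
        * Real.log s ^ (-(ℓ:ℝ)/((ℓ:ℝ)-1)^2)) atTop (𝓝 c))
    (hF' : ∀ᶠ s in atTop, HasDerivAt F (-(lam s)) s)
    (hF0 : Tendsto F atTop (𝓝 0)) :
    (∃ c'' > (0:ℝ), Tendsto (fun s : ℝ => F s ^ (ℓ-1)
        / (s⁻¹ * Real.log s ^ ((ℓ:ℝ)/((ℓ:ℝ)-1)))) atTop (𝓝 c'')) ∧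
    (∃ c' > (0:ℝ), Tendsto (fun s : ℝ => lam s
        / (F s ^ ℓ / |Real.log (F s)| ^ ((ℓ:ℝ)/((ℓ:ℝ)-1)))) atTop (𝓝 c')) := by
  have hl2 : (2:ℝ) ≤ (ℓ:ℝ) := by exact_mod_cast hℓ
  set e : ℝ := (ℓ:ℝ) - 1 with he_def
  have he : 0 < e := by simp only [he_def]; linarith
  have he1 : 1 ≤ e := by simp only [he_def]; linarith
  set c₁ : ℝ := (ℓ:ℝ) / e with hc₁_def
  set b : ℝ := (ℓ:ℝ) / e^2 with hb_def
  set q : ℝ := -(1/e) with hq_def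
  have hq_neg : q < 0 := by
    have : (0:ℝ) < 1/e := by positivity
    simp only [hq_def]; linarith
  have hbneg : -(ℓ:ℝ)/e^2 = -b := by rw [hb_def]; ring
  have hq1 : q - 1 = -c₁ := by
    have hne : e ≠ 0 := he.ne'
    have hℓe : (ℓ:ℝ) = e + 1 := by rw [he_def]; ring
    rw [hq_def, hc₁_def, hℓe, add_div, div_self hne]; ring
  have hbl : b * (ℓ:ℝ) = b + c₁ := by
    have hne : e ≠ 0 := he.ne'
    rw [hb_def, hc₁_def, div_add_div _ _ (pow_ne_zero 2 hne) hne, div_mul_eq_mul_div,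
      div_eq_div_iff (pow_ne_zero 2 hne) (mul_ne_zero (pow_ne_zero 2 hne) hne), he_def]; ring
  have hbe : b * e = c₁ := by
    rw [hb_def, hc₁_def]; field_simp
  have hqe : q * e = -1 := by rw [hq_def]; field_simp
  -- the reference function g
  set g : ℝ → ℝ := fun s => s ^ q * Real.log s ^ b with hg_def
  set g' : ℝ → ℝ := fun s => s ^ (q-1) * Real.log s ^ (b-1) * (q * Real.log s + b)
    with hg'_def
  have hA' : Tendsto (fun s : ℝ => lam s * s ^ c₁ * Real.log s ^ (-b)) atTop (𝓝 c) := by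
    rw [← hbneg]; exact hA
  -- derivative of g
  have hg'At : ∀ s : ℝ, 1 < s → HasDerivAt g (g' s) s := by
    intro s hs1
    have hs0 : (0:ℝ) < s := lt_trans one_pos hs1
    have hlog : 0 < Real.log s := Real.log_pos hs1
    have h1 : HasDerivAt (fun x : ℝ => x ^ q) (q * s ^ (q-1)) s := by
      simpa [mul_comm] using Real.hasDerivAt_rpow_const (p := q) (Or.inl hs0.ne')
    have h2 : HasDerivAt (fun x : ℝ => Real.log x ^ b)
        (b * Real.log s ^ (b-1) * s⁻¹) s := by
      have := (Real.hasDerivAt_rpow_const (x := Real.log s) (p := b)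
        (Or.inl hlog.ne')).comp s (Real.hasDerivAt_log hs0.ne')
      simpa [mul_comm, mul_assoc, Function.comp_def] using this
    have h := h1.mul h2
    refine h.congr_deriv ?_
    symm
    have e1 : s ^ q = s ^ (q-1) * s := by
      rw [← Real.rpow_add_one hs0.ne' (q-1)]; ring_nf
    have e2 : Real.log s ^ b = Real.log s ^ (b-1) * Real.log s := by
      rw [← Real.rpow_add_one hlog.ne' (b-1)]; ring_nf
    rw [hg'_def]
    simp only
    rw [e1, e2]
    field_simp
  -- g tends to 0
  have hg0 : Tendsto g atTop (𝓝 0) := aux_rpow_log_zero hq_neg b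
  -- g' is eventually nonzero
  have hqb : ∀ᶠ s in atTop, q * Real.log s + b < 0 := by
    filter_upwards [tendsto_log_atTop.eventually_gt_atTop (b / (-q))] with s hs
    have hq' : 0 < -q := neg_pos.mpr hq_neg
    have := (div_lt_iff₀ hq').mp hs
    nlinarith
  have hg'ne : ∀ᶠ s in atTop, g' s ≠ 0 := by
    filter_upwards [eventually_gt_atTop (1:ℝ), hqb] with s hs1 hs2
    have hs0 : (0:ℝ) < s := lt_trans one_pos hs1
    have hlog : 0 < Real.log s := Real.log_pos hs1
    have : g' s < 0 := by
      rw [hg'_def]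
      have h1 : 0 < s ^ (q-1) := Real.rpow_pos_of_pos hs0 _
      have h2 : 0 < Real.log s ^ (b-1) := Real.rpow_pos_of_pos hlog _
      exact mul_neg_of_pos_of_neg (mul_pos h1 h2) hs2
    exact ne_of_lt this
  -- ratio of derivatives
  have hW : Tendsto (fun y : ℝ => -y / (q * y + b)) atTop (𝓝 e) := by
    have h0 : Tendsto (fun y : ℝ => -1 / (q + b * y⁻¹)) atTop (𝓝 (-1 / q)) := by
      have hd : Tendsto (fun y : ℝ => q + b * y⁻¹) atTop (𝓝 q) := by
        have := tendsto_inv_atTop_zero.const_mul b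
        simpa using tendsto_const_nhds.add this
      exact tendsto_const_nhds.div hd (ne_of_lt hq_neg)
    have heq : -1 / q = e := by rw [hq_def]; field_simp
    rw [← heq]
    refine h0.congr' ?_
    filter_upwards [eventually_gt_atTop (0:ℝ),
      (tendsto_id (α := ℝ)).eventually_gt_atTop (b / (-q))] with y hy0 hy1
    have hq' : 0 < -q := neg_pos.mpr hq_neg
    have hde : q * y + b < 0 := by
      have := (div_lt_iff₀ hq').mp hy1
      simp only [id] at hy1
      nlinarith [(div_lt_iff₀ hq').mp hy1]
    have h1 : q + b * y⁻¹ = (q * y + b) / y := by field_simp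
    rw [h1, div_div_eq_mul_div]
    ring_nf
  have hWlog : Tendsto (fun s : ℝ => -Real.log s / (q * Real.log s + b)) atTop (𝓝 e) :=
    hW.comp tendsto_log_atTop
  have hquot : Tendsto (fun s : ℝ => (-(lam s)) / g' s) atTop (𝓝 (c * e)) := by
    have := hA'.mul hWlog
    refine this.congr' ?_
    filter_upwards [eventually_gt_atTop (1:ℝ), hqb] with s hs1 hs2
    have hs0 : (0:ℝ) < s := lt_trans one_pos hs1
    have hlog : 0 < Real.log s := Real.log_pos hs1
    rw [hg'_def]
    simp only
    rw [hq1, Real.rpow_neg hs0.le, Real.rpow_neg hlog.le,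
      show b - 1 = b + (-1) by ring, Real.rpow_add hlog, Real.rpow_neg_one]
    have n1 : s ^ c₁ ≠ 0 := (Real.rpow_pos_of_pos hs0 _).ne'
    have n2 : Real.log s ^ b ≠ 0 := (Real.rpow_pos_of_pos hlog _).ne'
    have n3 : q * Real.log s + b ≠ 0 := ne_of_lt hs2
    field_simp
  -- L'Hopital
  have hQ : Tendsto (fun s : ℝ => F s / g s) atTop (𝓝 (c * e)) := by
    refine HasDerivAt.lhopital_zero_atTop hF' ?_ hg'ne hF0 hg0 hquot
    filter_upwards [eventually_gt_atTop (1:ℝ)] with s hs using hg'At s hs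
  have hL : 0 < c * e := mul_pos hc he
  -- eventual positivity of F and g
  have hgpos : ∀ᶠ s in atTop, 0 < g s := by
    filter_upwards [eventually_gt_atTop (Real.exp 1)] with s hs
    have h1 : 1 < s := lt_trans (by simpa using Real.one_lt_exp_iff_of_pos (by norm_num) |>.mpr one_pos) hs
    have hlog : 0 < Real.log s := Real.log_pos h1
    have h0 : 0 < s := lt_trans one_pos h1
    positivity
  have hFpos : ∀ᶠ s in atTop, 0 < F s := by
    filter_upwards [hQ.eventually (eventually_gt_nhds hL), hgpos] with s h1 h2
    have hpos : (0:ℝ) < F s / g s := h1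
    rcases div_pos_iff.mp hpos with ⟨h,_⟩ | ⟨_,h⟩
    · exact h
    · linarith
  have hcastl1 : ((ℓ - 1 : ℕ) : ℝ) = e := by
    rw [he_def, Nat.cast_sub (by omega : 1 ≤ ℓ), Nat.cast_one]
  have hql : q * (ℓ:ℝ) = -c₁ := by rw [hq_def, hc₁_def]; ring
  -- Part 2
  have part2 : Tendsto (fun s : ℝ => F s ^ (ℓ-1) / (s⁻¹ * Real.log s ^ c₁))
      atTop (𝓝 ((c*e)^(ℓ-1))) := by
    refine (hQ.pow (ℓ-1)).congr' ?_
    filter_upwards [eventually_gt_atTop (1:ℝ)] with s hs1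
    have hs0 : (0:ℝ) < s := lt_trans one_pos hs1
    have hlog : 0 < Real.log s := Real.log_pos hs1
    have hgpow : g s ^ (ℓ - 1) = s⁻¹ * Real.log s ^ c₁ := by
      rw [hg_def]
      simp only
      rw [mul_pow, ← Real.rpow_natCast (s ^ q) (ℓ-1),
        ← Real.rpow_natCast (Real.log s ^ b) (ℓ-1),
        ← Real.rpow_mul hs0.le, ← Real.rpow_mul hlog.le, hcastl1, hqe, hbe,
        Real.rpow_neg_one]
    rw [div_pow, hgpow]
  -- log F / log s → q
  have hFlt1 : ∀ᶠ s in atTop, F s < 1 := hF0.eventually (eventually_lt_nhds one_pos)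
  have hQlog : Tendsto (fun s : ℝ => Real.log (F s / g s)) atTop (𝓝 (Real.log (c*e))) :=
    hQ.log (ne_of_gt hL)
  have hlogF : Tendsto (fun s : ℝ => Real.log (F s) / Real.log s) atTop (𝓝 q) := by
    have h1 : Tendsto (fun s : ℝ => Real.log (F s / g s) / Real.log s) atTop (𝓝 0) :=
      hQlog.div_atTop tendsto_log_atTop
    have h2 : Tendsto (fun s : ℝ => Real.log (Real.log s) / Real.log s) atTop (𝓝 0) :=
      Real.isLittleO_log_id_atTop.tendsto_div_nhds_zero.comp tendsto_log_atTop
    have h3 := (h1.add (tendsto_const_nhds (x := q) (f := atTop))).add (h2.const_mul b)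
    have h4 : Tendsto (fun s : ℝ => Real.log (F s / g s) / Real.log s + q
        + b * (Real.log (Real.log s) / Real.log s)) atTop (𝓝 q) := by
      simpa [mul_comm] using h3
    refine h4.congr' ?_
    filter_upwards [hFpos, hgpos, eventually_gt_atTop (1:ℝ)] with s hF1 hg1 hs1
    have hs0 : (0:ℝ) < s := lt_trans one_pos hs1
    have hlog : 0 < Real.log s := Real.log_pos hs1
    have hFg : 0 < F s / g s := div_pos hF1 hg1
    have e1 : Real.log (F s) = Real.log (F s / g s) + Real.log (g s) := by
      rw [← Real.log_mul (ne_of_gt hFg) (ne_of_gt hg1), div_mul_cancel₀ _ (ne_of_gt hg1)]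
    have e2 : Real.log (g s) = q * Real.log s + b * Real.log (Real.log s) := by
      rw [hg_def]
      simp only
      rw [Real.log_mul (Real.rpow_pos_of_pos hs0 _).ne' (Real.rpow_pos_of_pos hlog _).ne',
        Real.log_rpow hs0, Real.log_rpow hlog]
    rw [e1, e2]
    field_simp
    ring
  have habs : Tendsto (fun s : ℝ => |Real.log (F s)| / Real.log s) atTop (𝓝 (-q)) := by
    refine hlogF.neg.congr' ?_
    filter_upwards [hFpos, hFlt1, eventually_gt_atTop (1:ℝ)] with s h1 h2 h3
    rw [abs_of_neg (Real.log_neg h1 h2), neg_div]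
  have hmq : 0 < -q := neg_pos.mpr hq_neg
  have hC : Tendsto (fun s : ℝ => (|Real.log (F s)| / Real.log s) ^ c₁)
      atTop (𝓝 ((-q) ^ c₁)) := habs.rpow_const (Or.inl (ne_of_gt hmq))
  -- Part 3
  have part3 : Tendsto (fun s : ℝ => lam s / (F s ^ ℓ / |Real.log (F s)| ^ c₁))
      atTop (𝓝 (c * (-q) ^ c₁ / (c*e)^ℓ)) := by
    have h := (hA'.mul hC).div (hQ.pow ℓ) (ne_of_gt (pow_pos hL ℓ))
    refine h.congr' ?_
    filter_upwards [hFpos, hFlt1, hgpos, hposev, eventually_gt_atTop (1:ℝ)]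
      with s hF1 hF2 hg1 hlam hs1
    have hs0 : (0:ℝ) < s := lt_trans one_pos hs1
    have hlog : 0 < Real.log s := Real.log_pos hs1
    have hlogFneg : Real.log (F s) < 0 := Real.log_neg hF1 hF2
    have habsF : 0 < |Real.log (F s)| := abs_pos.mpr (ne_of_lt hlogFneg)
    have hgl : g s ^ ℓ = (s ^ c₁)⁻¹ * (Real.log s ^ b * Real.log s ^ c₁) := by
      rw [hg_def]
      simp only
      rw [mul_pow, ← Real.rpow_natCast (s ^ q) ℓ,
        ← Real.rpow_natCast (Real.log s ^ b) ℓ,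
        ← Real.rpow_mul hs0.le, ← Real.rpow_mul hlog.le, hql, hbl,
        Real.rpow_neg hs0.le, Real.rpow_add hlog]
    have n1 : s ^ c₁ ≠ 0 := (Real.rpow_pos_of_pos hs0 _).ne'
    have n2 : Real.log s ^ b ≠ 0 := (Real.rpow_pos_of_pos hlog _).ne'
    have n3 : Real.log s ^ c₁ ≠ 0 := (Real.rpow_pos_of_pos hlog _).ne'
    have n4 : F s ^ ℓ ≠ 0 := (pow_pos hF1 ℓ).ne'
    have n5 : |Real.log (F s)| ^ c₁ ≠ 0 := (Real.rpow_pos_of_pos habsF _).ne'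
    simp only [Pi.div_apply]
    rw [Real.div_rpow (abs_nonneg _) hlog.le, div_pow, hgl,
      Real.rpow_neg hlog.le]
    field_simp
  refine ⟨⟨(c*e)^(ℓ-1), pow_pos hL _, part2⟩,
    ⟨c * (-q) ^ c₁ / (c*e)^ℓ, ?_, part3⟩⟩
  exact div_pos (mul_pos hc (Real.rpow_pos_of_pos hmq _)) (pow_pos hL ℓ)

open Real Filter MeasureTheory

/-- The blow-up time `T = ∫_{s₀}^∞ λ(σ) dσ`. -/
noncomputable def Ttot (s₀ : ℝ) (lam : ℝ → ℝ) : ℝ := ∫ σ in Set.Ioi s₀, lam σ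

/-- The original time variable `t(s) = ∫_{s₀}^s λ(σ) dσ`. -/
noncomputable def tOf (s₀ : ℝ) (lam : ℝ → ℝ) (s : ℝ) : ℝ := ∫ σ in s₀..s, lam σ

/-- Conversion of the scaling law `λ(s) ≍ c s^{-ℓ/(ℓ-1)} (log s)^{ℓ/(ℓ-1)²}` in renormalized
time into the quantized blow-up rate `λ ≍ c' (T-t)^ℓ / |log(T-t)|^{ℓ/(ℓ-1)}` in original time. -/
theorem blowup_rate_conversion (ℓ : ℕ) (hℓ : 2 ≤ ℓ) (s₀ : ℝ) (hs₀ : 1 < s₀)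
    (lam : ℝ → ℝ) (hcont : ContinuousOn lam (Set.Ici s₀))
    (hpos : ∀ s : ℝ, s₀ ≤ s → 0 < lam s)
    (c : ℝ) (hc : 0 < c)
    (hasymp : Filter.Tendsto
      (fun s : ℝ => lam s * s ^ ((ℓ : ℝ) / ((ℓ : ℝ) - 1))
        * Real.log s ^ (-(ℓ : ℝ) / ((ℓ : ℝ) - 1) ^ 2))
      Filter.atTop (nhds c)) :
    MeasureTheory.IntegrableOn lam (Set.Ioi s₀) ∧
    (∃ c'' > (0:ℝ), Filter.Tendsto
      (fun s : ℝ => (Ttot s₀ lam - tOf s₀ lam s) ^ (ℓ - 1)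
        / (s⁻¹ * Real.log s ^ ((ℓ : ℝ) / ((ℓ : ℝ) - 1))))
      Filter.atTop (nhds c'')) ∧
    (∃ c' > (0:ℝ), Filter.Tendsto
      (fun s : ℝ => lam s
        / ((Ttot s₀ lam - tOf s₀ lam s) ^ ℓ
          / |Real.log (Ttot s₀ lam - tOf s₀ lam s)| ^ ((ℓ : ℝ) / ((ℓ : ℝ) - 1))))
      Filter.atTop (nhds c')) := by
  have hInt : MeasureTheory.IntegrableOn lam (Set.Ioi s₀) := by
    have hl2 : (2:ℝ) ≤ (ℓ:ℝ) := by exact_mod_cast hℓ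
    set e : ℝ := (ℓ:ℝ) - 1 with he_def
    have he : 0 < e := by simp only [he_def]; linarith
    set c₁ : ℝ := (ℓ:ℝ) / e with hc₁_def
    have hc₁1 : 1 < c₁ := by
      rw [hc₁_def, lt_div_iff₀ he, he_def]; linarith
    set p : ℝ := (1 + c₁)/2 with hp_def
    have hp1 : 1 < p := by rw [hp_def]; linarith
    have hpc : p < c₁ := by rw [hp_def]; linarith
    -- lam s * s^p → 0
    have hlp : Tendsto (fun s : ℝ => lam s * s ^ p) atTop (𝓝 0) := by
      have h0 := hasymp.mul (aux_rpow_log_zero (show p - c₁ < 0 by linarith) ((ℓ:ℝ)/e^2))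
      rw [mul_zero] at h0
      refine h0.congr' ?_
      filter_upwards [eventually_gt_atTop (1:ℝ)] with s hs1
      have hs0 : (0:ℝ) < s := lt_trans one_pos hs1
      have hlog : 0 < Real.log s := Real.log_pos hs1
      have e1 : s ^ c₁ * s ^ (p - c₁) = s ^ p := by
        rw [← Real.rpow_add hs0]; ring_nf
      have e2 : Real.log s ^ (-(ℓ:ℝ)/e^2) * Real.log s ^ ((ℓ:ℝ)/e^2) = 1 := by
        rw [← Real.rpow_add hlog, show (-(ℓ:ℝ)/e^2 + (ℓ:ℝ)/e^2) = 0 by ring, Real.rpow_zero]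
      calc lam s * s ^ c₁ * Real.log s ^ (-(ℓ:ℝ)/e^2) * (s ^ (p - c₁) * Real.log s ^ ((ℓ:ℝ)/e^2))
          = lam s * (s ^ c₁ * s ^ (p - c₁))
            * (Real.log s ^ (-(ℓ:ℝ)/e^2) * Real.log s ^ ((ℓ:ℝ)/e^2)) := by ring
        _ = lam s * s ^ p := by rw [e1, e2, mul_one]
    -- eventual bound
    have hbd : ∀ᶠ s : ℝ in atTop, ‖lam s‖ ≤ s ^ (-p) := by
      filter_upwards [hlp.eventually (eventually_le_nhds one_pos),
        eventually_ge_atTop s₀, eventually_gt_atTop (0:ℝ)] with s h1 h2 h3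
      have hsp : 0 < s ^ p := Real.rpow_pos_of_pos h3 _
      rw [Real.rpow_neg h3.le, norm_of_nonneg (hpos s h2).le, inv_eq_one_div,
        le_div_iff₀ hsp]
      exact h1
    -- get an explicit threshold M
    obtain ⟨M, hM⟩ := eventually_atTop.mp (hbd.and (eventually_ge_atTop (max s₀ 1)))
    have hsM : s₀ ≤ M := le_trans (le_max_left _ _) (hM M le_rfl).2
    have hM0 : 0 < M := lt_of_lt_of_le one_pos (le_trans (le_max_right _ _) (hM M le_rfl).2)
    have h1 : IntegrableOn lam (Set.Ioc s₀ M) := by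
      have := (hcont.mono (Set.Icc_subset_Ici_self : Set.Icc s₀ M ⊆ Set.Ici s₀)).integrableOn_Icc (μ := volume)
      exact this.mono_set Set.Ioc_subset_Icc_self
    have h2 : IntegrableOn lam (Set.Ioi M) := by
      have hint : IntegrableOn (fun t : ℝ => t ^ (-p)) (Set.Ioi M) :=
        integrableOn_Ioi_rpow_of_lt (by linarith) hM0
      refine Integrable.mono' hint ?_ ?_
      · exact (hcont.mono (fun x hx => le_trans hsM (le_of_lt hx))).aestronglyMeasurable
          measurableSet_Ioi
      · rw [ae_restrict_iff' measurableSet_Ioi]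
        exact Filter.Eventually.of_forall (fun s hs => (hM s (le_of_lt hs)).1)
    have := (h1.union h2).mono_set (by rw [Set.Ioc_union_Ioi_eq_Ioi hsM])
    exact this
  -- the tendsto of the interval integral to the improper integral
  have hT : Tendsto (fun s : ℝ => tOf s₀ lam s) atTop (𝓝 (Ttot s₀ lam)) := by
    have := MeasureTheory.intervalIntegral_tendsto_integral_Ioi s₀ hInt tendsto_id
    exact this
  have hF0 : Tendsto (fun s : ℝ => Ttot s₀ lam - tOf s₀ lam s) atTop (𝓝 0) := by
    have := tendsto_const_nhds (x := Ttot s₀ lam) (f := atTop (α := ℝ)) |>.sub hT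
    simpa using this
  have hF' : ∀ᶠ s : ℝ in atTop,
      HasDerivAt (fun s => Ttot s₀ lam - tOf s₀ lam s) (-(lam s)) s := by
    filter_upwards [eventually_gt_atTop s₀] with s hs
    have hii : IntervalIntegrable lam volume s₀ s := by
      rw [intervalIntegrable_iff, Set.uIoc_of_le hs.le]
      exact hInt.mono_set Set.Ioc_subset_Ioi_self
    have hmeas : StronglyMeasurableAtFilter lam (𝓝 s) :=
      ⟨Set.Ioi s₀, Ioi_mem_nhds hs,
        (hcont.mono Set.Ioi_subset_Ici_self).aestronglyMeasurable measurableSet_Ioi⟩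
    have hct : ContinuousAt lam s := hcont.continuousAt (Ici_mem_nhds hs)
    have h := intervalIntegral.integral_hasDerivAt_right hii hmeas hct
    have h2 := (hasDerivAt_const s (Ttot s₀ lam)).sub h
    simpa [tOf, Pi.sub_def] using h2
  have hposev : ∀ᶠ s : ℝ in atTop, 0 < lam s := by
    filter_upwards [eventually_ge_atTop s₀] with s hs using hpos s hs
  have hmain := aux_main ℓ hℓ lam (fun s => Ttot s₀ lam - tOf s₀ lam s)
    hposev c hc hasymp hF' hF0
  exact ⟨hInt, hmain.1, hmain.2⟩
end
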